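/- arXiv:2601.05972 — 3 statements merged into one kernel-verified Lean document; each statement's English description precedes it below -/
import Mathlib

section
/- Let A be a flat layout and N a positive integer. If A is N-complementable, then comp(A,N) is an N-complement of A: A ⊥ comp(A,N) and size(A)·size(comp(A,N)) = N. -/
/-- A flat layout, represented as its list of modes `(sᵢ, dᵢ)`:
the first component of each mode is a shape entry, the second a stride entry. -/
abbrev FlatLayout := List (ℕ × ℕ)

namespace FlatLayout

/-- Validity of a flat layout: every shape entry is a positive integer. -/
def Valid (L : FlatLayout) : Prop := ∀ p ∈ L, 0 < p.1

/-- The size of a flat layout: the product of its shape entries. -/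
def size (L : FlatLayout) : ℕ := (L.map Prod.fst).prod

/-- The cosize of a flat layout: `1 + Σ (sᵢ - 1) * dᵢ`. -/
def cosize (L : FlatLayout) : ℕ := 1 + (L.map fun p => (p.1 - 1) * p.2).sum

/-- The rank of a flat layout: its number of modes. -/
def rank (L : FlatLayout) : ℕ := L.length

/-- The layout function `Φ_L`: `Φ_L(x) = Σ xᵢ·dᵢ` where
`xᵢ = ⌊x / (s₁⋯sᵢ₋₁)⌋ mod sᵢ`. -/
def phi : FlatLayout → ℕ → ℕ
  | [], _ => 0
  | (s, d) :: rest, x => x % s * d + phi rest (x / s)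

/-- `squeeze L` deletes every mode whose shape entry equals `1`. -/
def squeeze (L : FlatLayout) : FlatLayout := L.filter fun p => p.1 != 1

/-- `filterZeros L` deletes every mode whose stride entry equals `0`. -/
def filterZeros (L : FlatLayout) : FlatLayout := L.filter fun p => p.2 != 0

/-- The ordering on modes: `(s,d) ⪯ (s',d')` iff `d < d'`, or `d = d'` and `s ≤ s'`. -/
def ModeLE (p q : ℕ × ℕ) : Prop := p.2 < q.2 ∨ (p.2 = q.2 ∧ p.1 ≤ q.1)

instance : DecidableRel ModeLE := fun p q => by unfold ModeLE; infer_instance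

/-- A flat layout is sorted if its consecutive modes are `⪯`-increasing. -/
def Sorted (L : FlatLayout) : Prop := L.Chain' ModeLE

/-- `sortL L` stably sorts the modes of `L` with respect to `⪯`. -/
def sortL (L : FlatLayout) : FlatLayout := L.mergeSort fun p q => decide (ModeLE p q)

/-- A flat layout is coalesced if no shape entry equals `1` and
for consecutive modes, `sᵢ·dᵢ ≠ dᵢ₊₁`. -/
def Coalesced (L : FlatLayout) : Prop :=
  (∀ p ∈ L, p.1 ≠ 1) ∧ L.Chain' fun p q => p.1 * p.2 ≠ q.2

/-- Combine adjacent modes `(s,d), (s',d')` with `d' = s·d` into `(s·s', d)`, repeatedly. -/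
def coalAux : List (ℕ × ℕ) → List (ℕ × ℕ)
  | [] => []
  | p :: rest =>
    match coalAux rest with
    | [] => [p]
    | q :: rest' =>
        if p.1 * p.2 = q.2 then (p.1 * q.1, p.2) :: rest' else p :: q :: rest'

/-- Coalesce of a flat layout: squeeze, then repeatedly combine adjacent modes
`(s,d), (s',d')` with `d' = s·d` into `(s·s', d)`. -/
def coal (L : FlatLayout) : FlatLayout := coalAux (squeeze L)

/-- Compactness: the layout function takes values in `{0, …, cosize L - 1}` and induces a
bijection `{0, …, size L - 1} → {0, …, cosize L - 1}`. -/
def Compact (L : FlatLayout) : Prop :=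
  Set.BijOn (phi L) {x | x < size L} {y | y < cosize L}

/-- `B` is a complement of `A` (written `A ⊥ B`) if the concatenation `A ⋆ B` is compact. -/
def Perp (A B : FlatLayout) : Prop := Compact (A ++ B)

/-- `A` is complementable if, writing `sort(squeeze A) = (s₁,…,sₘ):(d₁,…,dₘ)`,
`sᵢ·dᵢ` divides `dᵢ₊₁` for all `1 ≤ i < m`. -/
def Complementable (A : FlatLayout) : Prop :=
  (sortL (squeeze A)).Chain' fun p q => p.1 * p.2 ∣ q.2

/-- `B` is an `N`-complement of `A` if `B` is a complement of `A`
and `size A * size B = N`. -/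
def IsNComplement (A B : FlatLayout) (N : ℕ) : Prop :=
  Perp A B ∧ size A * size B = N

/-- `A` is `N`-complementable if, writing `sort(squeeze A) = (s₁,…,sₘ):(d₁,…,dₘ)`,
`sᵢ·dᵢ ∣ dᵢ₊₁` for all `1 ≤ i < m`, and `sₘ·dₘ ∣ N`. -/
def NComplementable (A : FlatLayout) (N : ℕ) : Prop :=
  ((sortL (squeeze A)).Chain' fun p q => p.1 * p.2 ∣ q.2) ∧
  ∀ p, (sortL (squeeze A)).getLast? = some p → p.1 * p.2 ∣ N

/-- Given `l = [(s₁,d₁),…,(sₘ,dₘ)]`, the layout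
`C = (d₁, d₂/(s₁d₁), …, dₘ/(sₘ₋₁dₘ₋₁)) : (1, s₁d₁, …, sₘ₋₁dₘ₋₁)`. -/
def compModes (l : List (ℕ × ℕ)) : List (ℕ × ℕ) :=
  match l with
  | [] => []
  | (_, d₁) :: t =>
      (d₁, 1) :: (l.zip t).map fun pq => (pq.2.2 / (pq.1.1 * pq.1.2), pq.1.1 * pq.1.2)

/-- The complement `comp A = coal C` of a complementable flat layout `A`. -/
def comp (A : FlatLayout) : FlatLayout := coal (compModes (sortL (squeeze A)))

/-- Given `l = [(s₁,d₁),…,(sₘ,dₘ)]` and `N`, the layout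
`C = (d₁, d₂/(s₁d₁), …, dₘ/(sₘ₋₁dₘ₋₁), N/(sₘdₘ)) : (1, s₁d₁, …, sₘ₋₁dₘ₋₁, sₘdₘ)`. -/
def compNModes (l : List (ℕ × ℕ)) (N : ℕ) : List (ℕ × ℕ) :=
  match l.getLast? with
  | none => [(N, 1)]
  | some (sm, dm) => compModes l ++ [(N / (sm * dm), sm * dm)]

/-- The `N`-complement `comp(A, N) = coal C` of an `N`-complementable flat layout `A`. -/
def compN (A : FlatLayout) (N : ℕ) : FlatLayout :=
  coal (compNModes (sortL (squeeze A)) N)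

/-- `L` is tractable if, writing `sort L = (s₁,…,sₘ):(d₁,…,dₘ)`, for every `1 ≤ i < m`
either `dᵢ = 0` or `sᵢ·dᵢ` divides `dᵢ₊₁`. -/
def Tractable (L : FlatLayout) : Prop :=
  (sortL L).Chain' fun p q => p.2 = 0 ∨ p.1 * p.2 ∣ q.2

end FlatLayout

/- ### Auxiliary development ### -/

namespace FlatLayout

def vals (L : FlatLayout) : Finset ℕ := (Finset.range (size L)).image (phi L)

@[simp] lemma size_nil : size ([] : FlatLayout) = 1 := rfl
@[simp] lemma size_cons (p : ℕ × ℕ) (L : FlatLayout) : size (p :: L) = p.1 * size L := by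
  simp [size]
@[simp] lemma cosize_nil : cosize ([] : FlatLayout) = 1 := rfl
lemma cosize_cons (p : ℕ × ℕ) (L : FlatLayout) :
    cosize (p :: L) = (p.1 - 1) * p.2 + cosize L := by
  simp [cosize]; ring

@[simp] lemma vals_nil : vals ([] : FlatLayout) = {0} := by
  simp [vals, size, phi]

lemma vals_cons (s d : ℕ) (L : FlatLayout) :
    vals ((s, d) :: L) = ((Finset.range s) ×ˢ vals L).image fun p => p.1 * d + p.2 := by
  ext y
  simp only [vals, Finset.mem_image, Finset.mem_range, size_cons, Finset.mem_product, Prod.exists]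
  constructor
  · rintro ⟨x, hx, rfl⟩
    have hs : 0 < s := by
      rcases Nat.eq_zero_or_pos s with h | h
      · simp [h] at hx
      · exact h
    refine ⟨x % s, phi L (x / s), ⟨Nat.mod_lt _ hs, x / s, ?_, rfl⟩, rfl⟩
    exact Nat.div_lt_iff_lt_mul hs |>.mpr (by rwa [Nat.mul_comm] at hx)
  · rintro ⟨a, v, ⟨ha, xv, hxv, rfl⟩, rfl⟩
    refine ⟨a + s * xv, ?_, ?_⟩
    · calc a + s * xv < s + s * xv := by omega
        _ = s * (xv + 1) := by ring
        _ ≤ s * size L := Nat.mul_le_mul_left _ (by omega)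
    · have h1 : (a + s * xv) % s = a := by
        rw [Nat.add_mul_mod_self_left, Nat.mod_eq_of_lt ha]
      have h2 : (a + s * xv) / s = xv := by
        rw [Nat.add_mul_div_left _ _ (by omega : 0 < s), Nat.div_eq_of_lt ha]; omega
      simp [phi, h1, h2]

/-- the equivalence that preserves compactness -/
def Equiv' (X Y : FlatLayout) : Prop :=
  size X = size Y ∧ cosize X = cosize Y ∧ vals X = vals Y

lemma Equiv'.refl (X : FlatLayout) : Equiv' X X := ⟨rfl, rfl, rfl⟩
lemma Equiv'.trans {X Y Z : FlatLayout} (h1 : Equiv' X Y) (h2 : Equiv' Y Z) : Equiv' X Z :=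
  ⟨h1.1.trans h2.1, h1.2.1.trans h2.2.1, h1.2.2.trans h2.2.2⟩

lemma Equiv'.cons {X Y : FlatLayout} (p : ℕ × ℕ) (h : Equiv' X Y) :
    Equiv' (p :: X) (p :: Y) := by
  obtain ⟨p1, p2⟩ := p
  refine ⟨by simp [h.1], by simp [cosize_cons, h.2.1], by rw [vals_cons, vals_cons, h.2.2]⟩

lemma equiv'_swap (p q : ℕ × ℕ) (L : FlatLayout) :
    Equiv' (p :: q :: L) (q :: p :: L) := by
  obtain ⟨s, d⟩ := p; obtain ⟨s', d'⟩ := q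
  refine ⟨by simp; ring, by simp [cosize_cons]; ring, ?_⟩
  rw [vals_cons, vals_cons, vals_cons, vals_cons]
  ext y
  simp only [Finset.mem_image, Finset.mem_product, Prod.exists, Finset.mem_range]
  constructor
  · rintro ⟨a, v, ⟨ha, b, w, ⟨hb, hw⟩, rfl⟩, rfl⟩
    exact ⟨b, a * d + w, ⟨hb, a, w, ⟨ha, hw⟩, rfl⟩, by ring⟩
  · rintro ⟨b, v, ⟨hb, a, w, ⟨ha, hw⟩, rfl⟩, rfl⟩
    exact ⟨a, b * d' + w, ⟨ha, b, w, ⟨hb, hw⟩, rfl⟩, by ring⟩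

lemma equiv'_of_perm {X Y : FlatLayout} (h : X.Perm Y) : Equiv' X Y := by
  induction h with
  | nil => exact Equiv'.refl _
  | cons p _ ih => exact ih.cons p
  | swap p q L => exact equiv'_swap q p L
  | trans _ _ ih1 ih2 => exact ih1.trans ih2

lemma equiv'_coalesce (s d s' : ℕ) (hs : 0 < s) (hs' : 0 < s') (L : FlatLayout) :
    Equiv' ((s, d) :: (s', s * d) :: L) ((s * s', d) :: L) := by
  refine ⟨by simp; ring, ?_, ?_⟩
  · simp only [cosize_cons]
    obtain ⟨a, rfl⟩ : ∃ a, s = a + 1 := ⟨s - 1, by omega⟩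
    obtain ⟨b, rfl⟩ : ∃ b, s' = b + 1 := ⟨s' - 1, by omega⟩
    have e1 : (a + 1) * (b + 1) - 1 = a + b + a * b := by
      have : (a + 1) * (b + 1) = (a + b + a * b) + 1 := by ring
      omega
    rw [e1]
    simp only [Nat.add_sub_cancel]
    have h2 : a * d + b * ((a + 1) * d) = (a + b + a * b) * d := by ring
    omega
  · rw [vals_cons, vals_cons, vals_cons]
    ext y
    simp only [Finset.mem_image, Finset.mem_product, Prod.exists, Finset.mem_range]
    constructor
    · rintro ⟨a, v, ⟨ha, b, w, ⟨hb, hw⟩, rfl⟩, rfl⟩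
      refine ⟨a + s * b, w, ⟨?_, hw⟩, by ring⟩
      calc a + s * b < s + s * b := by omega
        _ = s * (b + 1) := by ring
        _ ≤ s * s' := Nat.mul_le_mul_left _ (by omega)
    · rintro ⟨c, w, ⟨hc, hw⟩, rfl⟩
      have hs : 0 < s := by
        rcases Nat.eq_zero_or_pos s with h | h
        · simp [h] at hc
        · exact h
      refine ⟨c % s, c / s * (s * d) + w, ⟨Nat.mod_lt _ hs, c / s, w,
        ⟨Nat.div_lt_iff_lt_mul hs |>.mpr (by rwa [Nat.mul_comm] at hc), hw⟩, rfl⟩, ?_⟩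
      have : c % s + s * (c / s) = c := Nat.mod_add_div _ _
      nlinarith [this]

lemma equiv'_one (d : ℕ) (L : FlatLayout) : Equiv' ((1, d) :: L) L := by
  refine ⟨by simp, by simp [cosize_cons], ?_⟩
  rw [vals_cons]
  ext y
  simp only [Finset.mem_image, Finset.mem_product, Prod.exists, Finset.mem_range]
  constructor
  · rintro ⟨a, v, ⟨ha, hv⟩, rfl⟩
    interval_cases a; simpa using hv
  · intro hy; exact ⟨0, y, ⟨one_pos, hy⟩, by simp⟩

lemma equiv'_append_left {X Y : FlatLayout} (W : FlatLayout) (h : Equiv' X Y) :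
    Equiv' (W ++ X) (W ++ Y) := by
  induction W with
  | nil => exact h
  | cons p W ih => exact ih.cons p

/-- characterization of compactness -/
lemma compact_iff (L : FlatLayout) :
    Compact L ↔ cosize L = size L ∧ vals L = Finset.range (size L) := by
  have hset : {x | x < size L} = ↑(Finset.range (size L)) := by
    ext x; simp
  have hset2 : {y | y < cosize L} = ↑(Finset.range (cosize L)) := by
    ext x; simp
  constructor
  · intro h
    have himg : phi L '' {x | x < size L} = {y | y < cosize L} := h.image_eq
    have hv : vals L = Finset.range (cosize L) := by
      apply Finset.coe_injective
      rw [show vals L = (Finset.range (size L)).image (phi L) from rfl,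
        Finset.coe_image, ← hset, himg, hset2]
    have hcard := Finset.card_image_of_injOn (f := phi L) (s := Finset.range (size L))
      (by rw [← hset]; exact h.injOn)
    rw [show (Finset.range (size L)).image (phi L) = vals L from rfl, hv] at hcard
    simp only [Finset.card_range] at hcard
    exact ⟨hcard, by rw [hv, hcard]⟩
  · rintro ⟨hcs, hv⟩
    refine ⟨?_, ?_, ?_⟩
    · intro x hx
      have hm : phi L x ∈ vals L := Finset.mem_image_of_mem _ (by simpa using hx)
      rw [hv, Finset.mem_range] at hm
      show phi L x < cosize L
      omega
    · rw [hset]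
      apply Finset.injOn_of_card_image_eq
      rw [show (Finset.range (size L)).image (phi L) = vals L from rfl, hv]
    · intro y hy
      have : y ∈ vals L := by rw [hv, Finset.mem_range]; simpa [hcs] using hy
      obtain ⟨x, hx, hxy⟩ := Finset.mem_image.mp this
      exact ⟨x, by simpa using hx, hxy⟩

lemma Equiv'.compact {X Y : FlatLayout} (h : Equiv' X Y) (hY : Compact Y) : Compact X := by
  rw [compact_iff] at *
  exact ⟨by rw [h.1, h.2.1, hY.1], by rw [h.1, h.2.2, hY.2]⟩

end FlatLayout



namespace FlatLayout

lemma Equiv'.symm {X Y : FlatLayout} (h : Equiv' X Y) : Equiv' Y X :=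
  ⟨h.1.symm, h.2.1.symm, h.2.2.symm⟩

@[simp] lemma size_append (X Y : FlatLayout) : size (X ++ Y) = size X * size Y := by
  simp [size]

/-- complement modes with accumulated stride `k` -/
def Cx (k : ℕ) : List (ℕ × ℕ) → ℕ → FlatLayout
  | [], N => [(N / k, k)]
  | (s, d) :: t, N => (d / k, k) :: Cx (s * d) t N

/-- the interleaving of a layout with its complement modes -/
def inter (k : ℕ) : List (ℕ × ℕ) → ℕ → FlatLayout
  | [], N => [(N / k, k)]
  | (s, d) :: t, N => (d / k, k) :: (s, d) :: inter (s * d) t N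

/-- the divisibility chain carried through the recursion -/
def Good (k : ℕ) : List (ℕ × ℕ) → ℕ → Prop
  | [], N => k ∣ N
  | (s, d) :: t, N => k ∣ d ∧ Good (s * d) t N

/-- standard (column-major) layouts with initial stride `k` -/
def Std (k : ℕ) : FlatLayout → Prop
  | [] => True
  | (s, d) :: t => d = k ∧ Std (s * k) t

lemma good_dvd : ∀ (M : FlatLayout) (k N : ℕ), Good k M N → k ∣ N := by
  intro M
  induction M with
  | nil => exact fun k N h => h
  | cons p t ih =>
    obtain ⟨s, d⟩ := p
    intro k N h
    exact (h.1.trans (Dvd.intro_left s rfl)).trans (ih _ _ h.2)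

lemma good_pos : ∀ (M : FlatLayout) (k N : ℕ), Good k M N → 0 < N →
    ∀ p ∈ M, 0 < p.1 ∧ 0 < p.2 := by
  intro M
  induction M with
  | nil => intro _ _ _ _ p hp; simp at hp
  | cons q t ih =>
    obtain ⟨s, d⟩ := q
    intro k N h hN p hp
    have hsd : s * d ∣ N := good_dvd _ _ _ h.2
    have : 0 < s * d := by
      rcases Nat.eq_zero_or_pos (s * d) with h0 | h0
      · rw [h0] at hsd; simp [Nat.eq_zero_of_zero_dvd hsd] at hN
      · exact h0
    rcases List.mem_cons.mp hp with rfl | hp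
    · have hs : s ≠ 0 := by rintro rfl; simp at this
      have hd : d ≠ 0 := by rintro rfl; simp at this
      exact ⟨Nat.pos_of_ne_zero hs, Nat.pos_of_ne_zero hd⟩
    · exact ih _ _ h.2 hN p hp

lemma cx_helper : ∀ (t : List (ℕ × ℕ)) (s d N : ℕ),
    (d, 1) :: Cx (s * d) t N = compNModes ((s, d) :: t) N := by
  intro t
  induction t with
  | nil => intro s d N; simp [Cx, compNModes, compModes]
  | cons q t' ih =>
    intro s d N
    obtain ⟨s', d'⟩ := q
    have h := (ih s' d' N).symm
    rcases hm : ((s', d') :: t').getLast? with _ | m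
    · simp at hm
    obtain ⟨m1, m2⟩ := m
    simp only [compNModes, List.getLast?_cons_cons, hm, compModes, List.zip_cons_cons,
      List.map_cons, List.cons_append] at h ⊢
    rw [List.cons.injEq] at h
    show (d, 1) :: (d' / (s * d), s * d) :: Cx (s' * d') t' N = _
    rw [← h.2]

lemma cx_eq (M : FlatLayout) (N : ℕ) : Cx 1 M N = compNModes M N := by
  cases M with
  | nil => simp [Cx, compNModes]
  | cons p t =>
    obtain ⟨s, d⟩ := p
    have : Cx 1 ((s, d) :: t) N = (d / 1, 1) :: Cx (s * d) t N := rfl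
    rw [this, Nat.div_one, cx_helper]

lemma inter_std : ∀ (M : FlatLayout) (k N : ℕ), Good k M N → Std k (inter k M N) := by
  intro M
  induction M with
  | nil => intro k N _; exact ⟨rfl, trivial⟩
  | cons p t ih =>
    obtain ⟨s, d⟩ := p
    intro k N h
    refine ⟨rfl, ?_⟩
    have hdk : d / k * k = d := Nat.div_mul_cancel h.1
    show d = d / k * k ∧ Std (s * (d / k * k)) (inter (s * d) t N)
    rw [hdk]
    exact ⟨rfl, ih _ _ h.2⟩

lemma inter_pos : ∀ (M : FlatLayout) (k N : ℕ), Good k M N → 0 < N →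
    ∀ p ∈ inter k M N, 0 < p.1 := by
  intro M
  induction M with
  | nil =>
    intro k N h hN p hp
    simp only [inter, List.mem_singleton] at hp
    subst hp
    have hk : 0 < k := by
      rcases Nat.eq_zero_or_pos k with rfl | h'
      · simp [Nat.eq_zero_of_zero_dvd h] at hN
      · exact h'
    exact Nat.div_pos (Nat.le_of_dvd hN h) hk
  | cons q t ih =>
    obtain ⟨s, d⟩ := q
    intro k N h hN p hp
    have hd : 0 < d := (good_pos ((s, d) :: t) k N h hN (s, d) (by simp)).2
    have hs : 0 < s := (good_pos ((s, d) :: t) k N h hN (s, d) (by simp)).1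
    have hk : 0 < k := by
      rcases Nat.eq_zero_or_pos k with rfl | h'
      · simp [Nat.eq_zero_of_zero_dvd h.1] at hd
      · exact h'
    rcases List.mem_cons.mp hp with rfl | hp
    · exact Nat.div_pos (Nat.le_of_dvd hd h.1) hk
    rcases List.mem_cons.mp hp with rfl | hp
    · exact hs
    · exact ih _ _ h.2 hN p hp

lemma inter_size : ∀ (M : FlatLayout) (k N : ℕ), Good k M N →
    size (inter k M N) * k = N := by
  intro M
  induction M with
  | nil =>
    intro k N h
    show N / k * 1 * k = N
    rw [Nat.mul_one, Nat.div_mul_cancel h]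
  | cons q t ih =>
    obtain ⟨s, d⟩ := q
    intro k N h
    show d / k * (s * size (inter (s * d) t N)) * k = N
    have h1 : d / k * k = d := Nat.div_mul_cancel h.1
    have h2 : size (inter (s * d) t N) * (s * d) = N := ih _ _ h.2
    calc d / k * (s * size (inter (s * d) t N)) * k
        = (d / k * k) * (s * size (inter (s * d) t N)) := by ring
      _ = size (inter (s * d) t N) * (s * d) := by rw [h1]; ring
      _ = N := h2

lemma std_phi : ∀ (Z : FlatLayout) (k : ℕ), Std k Z → ∀ x, phi Z x = k * (x % size Z) := by
  intro Z
  induction Z with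
  | nil => intro k _ x; simp [phi, size, Nat.mod_one]
  | cons p t ih =>
    obtain ⟨s, d⟩ := p
    rintro k ⟨hdk, hstd⟩ x
    subst hdk
    have key : x % (s * size t) = x % s + s * (x / s % size t) := by
      conv_lhs => rw [← Nat.mod_add_div (x % (s * size t)) s]
      rw [Nat.mod_mul_right_mod, Nat.mod_mul_right_div_self]
    show x % s * d + phi t (x / s) = d * (x % (s * size t))
    rw [ih _ hstd, key]
    ring

lemma size_pos_of (Z : FlatLayout) (h : ∀ p ∈ Z, 0 < p.1) : 0 < size Z := by
  induction Z with
  | nil => simp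
  | cons p t ih =>
    simp only [size_cons]
    exact Nat.mul_pos (h p (by simp)) (ih fun q hq => h q (by simp [hq]))

lemma std_cosize : ∀ (Z : FlatLayout) (k : ℕ), Std k Z → (∀ p ∈ Z, 0 < p.1) →
    cosize Z = k * (size Z - 1) + 1 := by
  intro Z
  induction Z with
  | nil => intro k _ _; simp [cosize, size]
  | cons p t ih =>
    obtain ⟨s, d⟩ := p
    rintro k ⟨hdk, hstd⟩ hpos
    subst hdk
    have ht : 0 < size t := size_pos_of t fun q hq => hpos q (by simp [hq])
    have hs : 0 < s := hpos (s, d) (by simp)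
    rw [cosize_cons, ih _ hstd fun q hq => hpos q (by simp [hq])]
    obtain ⟨a, rfl⟩ : ∃ a, s = a + 1 := ⟨s - 1, by omega⟩
    obtain ⟨b, hb⟩ : ∃ b, size t = b + 1 := ⟨size t - 1, by omega⟩
    simp only [size_cons, hb, Nat.add_sub_cancel]
    have e1 : (a + 1) * (b + 1) - 1 = a + b + a * b := by
      have : (a + 1) * (b + 1) = (a + b + a * b) + 1 := by ring
      omega
    rw [e1]
    ring

lemma compact_inter (M : FlatLayout) (N : ℕ) (h : Good 1 M N) (hN : 0 < N) :
    Compact (inter 1 M N) := by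
  rw [compact_iff]
  have hsz : size (inter 1 M N) = N := by
    have := inter_size M 1 N h
    omega
  have hpos := inter_pos M 1 N h hN
  have hstd := inter_std M 1 N h
  refine ⟨?_, ?_⟩
  · rw [std_cosize _ _ hstd hpos, hsz]
    omega
  · ext y
    simp only [vals, Finset.mem_image, Finset.mem_range, hsz]
    constructor
    · rintro ⟨x, hx, rfl⟩
      rw [std_phi _ _ hstd, hsz]
      have := Nat.mod_lt x hN
      omega
    · intro hy
      refine ⟨y, hy, ?_⟩
      rw [std_phi _ _ hstd, hsz, Nat.mod_eq_of_lt hy]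
      omega

lemma coalAux_cons_of_nil {rest : FlatLayout} (p : ℕ × ℕ) (h : coalAux rest = []) :
    coalAux (p :: rest) = [p] := by
  rw [coalAux, h]

lemma coalAux_cons_of_cons {rest rest' : FlatLayout} (p q : ℕ × ℕ)
    (h : coalAux rest = q :: rest') :
    coalAux (p :: rest) =
      if p.1 * p.2 = q.2 then (p.1 * q.1, p.2) :: rest' else p :: q :: rest' := by
  rw [coalAux, h]

lemma coalAux_shape_pos : ∀ (X : FlatLayout), (∀ p ∈ X, 0 < p.1) →
    ∀ p ∈ coalAux X, 0 < p.1 := by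
  intro X
  induction X with
  | nil => intro _ p hp; simp [coalAux] at hp
  | cons q rest ih =>
    intro hX p hp
    have htail : ∀ p ∈ rest, 0 < p.1 := fun p h => hX p (by simp [h])
    rcases h' : coalAux rest with _ | ⟨r, rest'⟩
    · rw [coalAux_cons_of_nil q h'] at hp
      simp only [List.mem_singleton] at hp
      subst hp
      exact hX _ (List.mem_cons_self)
    · have hrec : ∀ p ∈ r :: rest', 0 < p.1 := h' ▸ ih htail
      rw [coalAux_cons_of_cons q r h'] at hp
      by_cases hc : q.1 * q.2 = r.2
      · rw [if_pos hc] at hp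
        rcases List.mem_cons.mp hp with rfl | hp
        · exact Nat.mul_pos (hX _ (List.mem_cons_self)) (hrec r (List.mem_cons_self))
        · exact hrec p (by simp [hp])
      · rw [if_neg hc] at hp
        rcases List.mem_cons.mp hp with rfl | hp
        · exact hX _ (List.mem_cons_self)
        · exact hrec p hp

lemma coalAux_equiv : ∀ (X : FlatLayout), (∀ p ∈ X, 0 < p.1) →
    Equiv' (coalAux X) X := by
  intro X
  induction X with
  | nil => intro _; exact Equiv'.refl _
  | cons q rest ih =>
    intro hX
    have htail : ∀ p ∈ rest, 0 < p.1 := fun p hp => hX p (by simp [hp])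
    have ihr := ih htail
    rcases h' : coalAux rest with _ | ⟨r, rest'⟩
    · rw [coalAux_cons_of_nil q h']
      rw [h'] at ihr
      exact ihr.cons q
    · rw [coalAux_cons_of_cons q r h']
      rw [h'] at ihr
      obtain ⟨q1, q2⟩ := q
      obtain ⟨r1, r2⟩ := r
      by_cases hpq : q1 * q2 = r2
      · rw [if_pos hpq]
        have hq1 : 0 < q1 := hX (q1, q2) (by simp)
        have hr1 : 0 < r1 :=
          coalAux_shape_pos rest htail (r1, r2) (by rw [h']; simp)
        have hco := equiv'_coalesce q1 q2 r1 hq1 hr1 rest'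
        rw [hpq] at hco
        exact hco.symm.trans (ihr.cons (q1, q2))
      · rw [if_neg hpq]
        exact ihr.cons (q1, q2)

lemma equiv'_squeeze (X : FlatLayout) : Equiv' (squeeze X) X := by
  induction X with
  | nil => exact Equiv'.refl _
  | cons p t ih =>
    obtain ⟨s, d⟩ := p
    by_cases hs : s = 1
    · subst hs
      have : squeeze ((1, d) :: t) = squeeze t := by simp [squeeze]
      rw [this]
      exact ih.trans (equiv'_one d t).symm
    · have : squeeze ((s, d) :: t) = (s, d) :: squeeze t := by
        simp [squeeze, hs]
      rw [this]
      exact ih.cons (s, d)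

lemma equiv'_ones_prefix : ∀ (W : FlatLayout), (∀ p ∈ W, p.1 = 1) →
    ∀ X, Equiv' (W ++ X) X := by
  intro W
  induction W with
  | nil => intro _ X; exact Equiv'.refl _
  | cons p t ih =>
    intro hW X
    obtain ⟨s, d⟩ := p
    have hs : s = 1 := hW (s, d) (by simp)
    subst hs
    exact (equiv'_one d (t ++ X)).trans (ih (fun q hq => hW q (by simp [hq])) X)

lemma perm_inter : ∀ (M : FlatLayout) (k N : ℕ),
    (M ++ Cx k M N).Perm (inter k M N) := by
  intro M
  induction M with
  | nil => intro k N; exact List.Perm.refl _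
  | cons q t ih =>
    obtain ⟨s, d⟩ := q
    intro k N
    show ((s, d) :: (t ++ (d / k, k) :: Cx (s * d) t N)).Perm
      ((d / k, k) :: (s, d) :: inter (s * d) t N)
    refine List.Perm.trans (List.Perm.cons _ List.perm_middle) ?_
    refine List.Perm.trans (List.Perm.swap _ _ _) ?_
    exact ((ih _ _).cons _).cons _

lemma cx_subset : ∀ (M : FlatLayout) (k N : ℕ) (p : ℕ × ℕ),
    p ∈ Cx k M N → p ∈ inter k M N := by
  intro M
  induction M with
  | nil => intro k N p hp; exact hp
  | cons q t ih =>
    obtain ⟨s, d⟩ := q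
    intro k N p hp
    rcases List.mem_cons.mp hp with rfl | hp
    · exact List.mem_cons_self
    · exact List.mem_cons_of_mem _ (List.mem_cons_of_mem _ (ih _ _ _ hp))

lemma good_of_chain : ∀ (M : FlatLayout) (k N : ℕ),
    (M.Chain' fun p q => p.1 * p.2 ∣ q.2) →
    (∀ p, M.getLast? = some p → p.1 * p.2 ∣ N) →
    (∀ p, M.head? = some p → k ∣ p.2) → (M = [] → k ∣ N) → Good k M N := by
  intro M
  induction M with
  | nil => intro k N _ _ _ h4; exact h4 rfl
  | cons q t ih =>
    obtain ⟨s, d⟩ := q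
    intro k N h1 h2 h3 _
    refine ⟨h3 (s, d) rfl, ?_⟩
    cases t with
    | nil =>
      exact ih (s * d) N (by exact List.isChain_nil) (by simp) (by simp)
        (fun _ => h2 (s, d) (by simp))
    | cons r t' =>
      simp only [List.Chain', List.isChain_cons_cons] at h1
      refine ih (s * d) N h1.2 (fun p hp => h2 p (by rw [List.getLast?_cons_cons]; exact hp))
        (fun p hp => ?_) (by simp)
      simp only [List.head?_cons, Option.some.injEq] at hp
      subst hp
      exact h1.1

end FlatLayout


open FlatLayout in
theorem compN_isNComplement (A : FlatLayout) (N : ℕ) (hA : A.Valid) (hN : 0 < N)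
    (hc : NComplementable A N) :
    IsNComplement A (compN A N) N := by
  classical
  set M := sortL (squeeze A) with hM
  have hgood : Good 1 M N :=
    good_of_chain M 1 N hc.1 hc.2 (fun p _ => one_dvd _) (fun _ => one_dvd _)
  have hposX : ∀ p ∈ Cx 1 M N, 0 < p.1 := fun p hp =>
    inter_pos M 1 N hgood hN p (cx_subset M 1 N p hp)
  have hBeq : compN A N = coalAux (squeeze (Cx 1 M N)) := by
    rw [compN, coal, cx_eq]
  have eB : Equiv' (compN A N) (Cx 1 M N) := by
    rw [hBeq]
    exact (coalAux_equiv (squeeze (Cx 1 M N))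
      (fun p hp => hposX p (List.mem_of_mem_filter hp))).trans (equiv'_squeeze _)
  set X := Cx 1 M N with hX
  set ones := A.filter (fun p => !(p.1 != 1)) with hOnesDef
  have hOnes : ∀ p ∈ ones, p.1 = 1 := by
    intro p hp
    rw [hOnesDef, List.mem_filter] at hp
    simpa using hp.2
  have hp2 : (squeeze A ++ ones).Perm A := List.filter_append_perm _ A
  have e2 : (A ++ X).Perm ((ones ++ squeeze A) ++ X) :=
    ((hp2.symm).append_right _).trans ((List.perm_append_comm).append_right _)
  have e3 : Equiv' ((ones ++ squeeze A) ++ X) (squeeze A ++ X) := by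
    rw [List.append_assoc]
    exact equiv'_ones_prefix ones hOnes _
  have e4 : (squeeze A ++ X).Perm (M ++ X) :=
    ((List.mergeSort_perm _ _).symm).append_right _
  have e5 : (M ++ X).Perm (inter 1 M N) := perm_inter M 1 N
  have echain : Equiv' (A ++ compN A N) (inter 1 M N) :=
    (equiv'_append_left A eB).trans <| (equiv'_of_perm e2).trans <| e3.trans <|
      (equiv'_of_perm e4).trans (equiv'_of_perm e5)
  have hsz : size (inter 1 M N) = N := by
    have := inter_size M 1 N hgood
    omega
  refine ⟨echain.compact (compact_inter M N hgood hN), ?_⟩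
  have h1 : size (A ++ compN A N) = N := by rw [echain.1, hsz]
  rw [size_append] at h1
  exact h1
end

section
/- Let N be a positive integer and A an N-complementable flat layout. If B is a flat layout such that (1) B is an N-complement of A, (2) B is coalesced, and (3) B is sorted, then B = comp(A,N). -/
open FlatLayout

namespace FLAux

lemma modeLE_refl (p : ℕ × ℕ) : ModeLE p p := Or.inr ⟨rfl, le_refl _⟩

instance : IsTrans (ℕ × ℕ) ModeLE :=
  ⟨by intro a b c h1 h2; unfold ModeLE at *; omega⟩

instance : IsAntisymm (ℕ × ℕ) ModeLE := by
  constructor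
  intro a b h1 h2
  obtain ⟨a1, a2⟩ := a; obtain ⟨b1, b2⟩ := b
  unfold ModeLE at h1 h2
  simp only [Prod.mk.injEq]
  simp only at h1 h2
  omega

lemma phi_zero (L : FlatLayout) : phi L 0 = 0 := by
  induction L with
  | nil => rfl
  | cons p t ih => obtain ⟨s, d⟩ := p; simp [phi, ih]

lemma size_nil : size ([] : FlatLayout) = 1 := rfl

lemma size_cons (s d : ℕ) (t : FlatLayout) : size ((s, d) :: t) = s * size t := by
  simp [size]

lemma size_append (X Y : FlatLayout) : size (X ++ Y) = size X * size Y := by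
  simp [size]

lemma size_perm {L L' : FlatLayout} (h : L.Perm L') : size L = size L' :=
  List.Perm.prod_eq (h.map _)

lemma cosize_perm {L L' : FlatLayout} (h : L.Perm L') : cosize L = cosize L' := by
  unfold cosize; rw [List.Perm.sum_eq (h.map _)]

lemma size_squeeze (L : FlatLayout) : size (squeeze L) = size L := by
  induction L with
  | nil => rfl
  | cons p t ih =>
    obtain ⟨s, d⟩ := p
    have hf : squeeze ((s, d) :: t) = if (s != 1) = true then (s, d) :: squeeze t else squeeze t := by
      simp [squeeze, List.filter_cons]
    by_cases hs : s = 1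
    · rw [hf, if_neg (by simp [hs]), ih, hs, size_cons, one_mul]
    · rw [hf, if_pos (by simp [hs]), size_cons, ih, size_cons]

lemma setIio (n : ℕ) : {x : ℕ | x < n} = ↑(Finset.range n) := by ext; simp

lemma compact_size_eq_cosize {L : FlatLayout} (h : Compact L) : size L = cosize L := by
  have hb : Set.BijOn (phi L) {x | x < size L} {y | y < cosize L} := h
  have h1 : (phi L '' {x | x < size L}).ncard = (Finset.range (size L)).card := by
    rw [Set.ncard_image_of_injOn hb.injOn, setIio, Set.ncard_coe_finset]
  rw [hb.image_eq, setIio, Set.ncard_coe_finset] at h1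
  simpa using h1.symm

lemma key (s : ℕ) (hs : 0 < s) (a b : ℕ) (ha : a < s) :
    (a + s * b) % s = a ∧ (a + s * b) / s = b := by
  constructor
  · rw [mul_comm, Nat.add_mul_mod_self_right, Nat.mod_eq_of_lt ha]
  · rw [mul_comm, Nat.add_mul_div_right _ _ hs, Nat.div_eq_of_lt ha, zero_add]

lemma lt_helper (s b m M : ℕ) (hb : b < s) (hm : m < M) : b + s * m < s * M := by
  have h1 : b + s * m < s * (m + 1) := by rw [Nat.mul_succ]; omega
  exact lt_of_lt_of_le h1 (Nat.mul_le_mul_left s hm)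

lemma swap_decomp (s₁ s₂ : ℕ) (hs₁ : 0 < s₁) (hs₂ : 0 < s₂) (z : ℕ) :
    (z / s₁ % s₂ + s₂ * (z % s₁) + s₂ * s₁ * (z / s₁ / s₂)) % s₂ = z / s₁ % s₂ ∧
    (z / s₁ % s₂ + s₂ * (z % s₁) + s₂ * s₁ * (z / s₁ / s₂)) / s₂ % s₁ = z % s₁ ∧
    (z / s₁ % s₂ + s₂ * (z % s₁) + s₂ * s₁ * (z / s₁ / s₂)) / s₂ / s₁ = z / s₁ / s₂ := by
  have ha : z % s₁ < s₁ := Nat.mod_lt _ hs₁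
  have hb : z / s₁ % s₂ < s₂ := Nat.mod_lt _ hs₂
  have hw : z / s₁ % s₂ + s₂ * (z % s₁) + s₂ * s₁ * (z / s₁ / s₂)
      = z / s₁ % s₂ + s₂ * (z % s₁ + s₁ * (z / s₁ / s₂)) := by ring
  rw [hw]
  obtain ⟨h1, h2⟩ := key s₂ hs₂ (z / s₁ % s₂) (z % s₁ + s₁ * (z / s₁ / s₂)) hb
  obtain ⟨h3, h4⟩ := key s₁ hs₁ (z % s₁) (z / s₁ / s₂) ha
  rw [h1, h2, h3, h4]
  exact ⟨rfl, rfl, rfl⟩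

lemma swap_side (s₁ s₂ K : ℕ) (hs₁ : 0 < s₁) (hs₂ : 0 < s₂) (z : ℕ) (hz : z < s₁ * (s₂ * K)) :
    (z / s₁ % s₂ + s₂ * (z % s₁) + s₂ * s₁ * (z / s₁ / s₂)) < s₂ * (s₁ * K) ∧
    ((z / s₁ % s₂ + s₂ * (z % s₁) + s₂ * s₁ * (z / s₁ / s₂)) / s₂ % s₁
      + s₁ * ((z / s₁ % s₂ + s₂ * (z % s₁) + s₂ * s₁ * (z / s₁ / s₂)) % s₂)
      + s₁ * s₂ * ((z / s₁ % s₂ + s₂ * (z % s₁) + s₂ * s₁ * (z / s₁ / s₂)) / s₂ / s₁)) = z := by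
  obtain ⟨h1, h2, h3⟩ := swap_decomp s₁ s₂ hs₁ hs₂ z
  have ha : z % s₁ < s₁ := Nat.mod_lt _ hs₁
  have hb : z / s₁ % s₂ < s₂ := Nat.mod_lt _ hs₂
  have hdiv : z / s₁ < s₂ * K := by
    rw [Nat.div_lt_iff_lt_mul hs₁, mul_comm (s₂ * K) s₁]; exact hz
  have hc : z / s₁ / s₂ < K := by
    rw [Nat.div_lt_iff_lt_mul hs₂, mul_comm K s₂]; exact hdiv
  constructor
  · have hbnd : z % s₁ + s₁ * (z / s₁ / s₂) < s₁ * K := lt_helper s₁ _ _ K ha hc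
    have : z / s₁ % s₂ + s₂ * (z % s₁) + s₂ * s₁ * (z / s₁ / s₂)
        = z / s₁ % s₂ + s₂ * (z % s₁ + s₁ * (z / s₁ / s₂)) := by ring
    rw [this]
    exact lt_helper s₂ _ _ (s₁ * K) hb hbnd
  · rw [h1, h2, h3]
    have e1 : z / s₁ % s₂ + s₂ * (z / s₁ / s₂) = z / s₁ := Nat.mod_add_div _ _
    have e2 : z % s₁ + s₁ * (z / s₁) = z := Nat.mod_add_div _ _
    calc z % s₁ + s₁ * (z / s₁ % s₂) + s₁ * s₂ * (z / s₁ / s₂)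
        = z % s₁ + s₁ * (z / s₁ % s₂ + s₂ * (z / s₁ / s₂)) := by ring
      _ = z % s₁ + s₁ * (z / s₁) := by rw [e1]
      _ = z := e2

lemma phi_perm {L L' : FlatLayout} (h : L.Perm L') :
    ∃ g g' : ℕ → ℕ,
      (∀ x, x < size L → g x < size L' ∧ g' (g x) = x ∧ phi L' (g x) = phi L x) ∧
      (∀ y, y < size L' → g' y < size L ∧ g (g' y) = y) := by
  induction h with
  | nil => exact ⟨id, id, fun x hx => ⟨hx, rfl, rfl⟩, fun y hy => ⟨hy, rfl⟩⟩
  | @cons p l₁ l₂ hp ih =>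
    obtain ⟨g, g', hg, hg'⟩ := ih
    obtain ⟨s, d⟩ := p
    by_cases hs : s = 0
    · subst hs
      refine ⟨id, id, ?_, ?_⟩ <;> intro z hz <;> (exfalso; rw [size_cons] at hz; omega)
    have hs0 : 0 < s := Nat.pos_of_ne_zero hs
    refine ⟨fun x => x % s + s * g (x / s), fun y => y % s + s * g' (y / s), ?_, ?_⟩
    · intro x hx
      rw [size_cons] at hx
      have hdiv : x / s < size l₁ := by
        rw [Nat.div_lt_iff_lt_mul hs0, mul_comm (size l₁) s]; exact hx
      obtain ⟨h1, h2, h3⟩ := hg (x / s) hdiv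
      have hxm : x % s < s := Nat.mod_lt _ hs0
      obtain ⟨hm, hd⟩ := key s hs0 (x % s) (g (x / s)) hxm
      refine ⟨?_, ?_, ?_⟩
      · rw [size_cons]; exact lt_helper s _ _ _ hxm h1
      · show (x % s + s * g (x / s)) % s + s * g' ((x % s + s * g (x / s)) / s) = x
        rw [hm, hd, h2]; exact Nat.mod_add_div x s
      · show phi ((s, d) :: l₂) (x % s + s * g (x / s)) = phi ((s, d) :: l₁) x
        simp only [phi]
        rw [hm, hd, h3]
    · intro y hy
      rw [size_cons] at hy
      have hdiv : y / s < size l₂ := by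
        rw [Nat.div_lt_iff_lt_mul hs0, mul_comm (size l₂) s]; exact hy
      obtain ⟨h1, h2⟩ := hg' (y / s) hdiv
      have hym : y % s < s := Nat.mod_lt _ hs0
      obtain ⟨hm, hd⟩ := key s hs0 (y % s) (g' (y / s)) hym
      refine ⟨by rw [size_cons]; exact lt_helper s _ _ _ hym h1, ?_⟩
      show (y % s + s * g' (y / s)) % s + s * g ((y % s + s * g' (y / s)) / s) = y
      rw [hm, hd, h2]; exact Nat.mod_add_div y s
  | swap a b l =>
    obtain ⟨s₂, d₂⟩ := a
    obtain ⟨s₁, d₁⟩ := b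
    -- L = (s₁,d₁)::(s₂,d₂)::l,  L' = (s₂,d₂)::(s₁,d₁)::l
    by_cases h0 : s₁ = 0 ∨ s₂ = 0
    · refine ⟨id, id, ?_, ?_⟩ <;> intro z hz <;>
        (exfalso; rw [size_cons, size_cons] at hz;
         rcases h0 with h | h <;> subst h <;> omega)
    push_neg at h0
    obtain ⟨hs₁, hs₂⟩ := h0
    have hs₁0 : 0 < s₁ := Nat.pos_of_ne_zero hs₁
    have hs₂0 : 0 < s₂ := Nat.pos_of_ne_zero hs₂
    refine ⟨fun z => z / s₁ % s₂ + s₂ * (z % s₁) + s₂ * s₁ * (z / s₁ / s₂),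
            fun w => w / s₂ % s₁ + s₁ * (w % s₂) + s₁ * s₂ * (w / s₂ / s₁), ?_, ?_⟩
    · intro z hz
      rw [size_cons, size_cons] at hz
      obtain ⟨hbnd, hinv⟩ := swap_side s₁ s₂ (size l) hs₁0 hs₂0 z hz
      obtain ⟨e1, e2, e3⟩ := swap_decomp s₁ s₂ hs₁0 hs₂0 z
      refine ⟨by rw [size_cons, size_cons]; exact hbnd, hinv, ?_⟩
      simp only [phi]
      rw [e1, e2, e3]
      ring
    · intro w hw
      rw [size_cons, size_cons] at hw
      obtain ⟨hbnd, hinv⟩ := swap_side s₂ s₁ (size l) hs₂0 hs₁0 w hw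
      exact ⟨by rw [size_cons, size_cons]; exact hbnd, hinv⟩
  | trans h₁ h₂ ih₁ ih₂ =>
    obtain ⟨g₁, g₁', H₁, H₁'⟩ := ih₁
    obtain ⟨g₂, g₂', H₂, H₂'⟩ := ih₂
    refine ⟨fun x => g₂ (g₁ x), fun y => g₁' (g₂' y), ?_, ?_⟩
    · intro x hx
      obtain ⟨ha, hb, hc⟩ := H₁ x hx
      obtain ⟨hd, he, hf⟩ := H₂ _ ha
      exact ⟨hd, by show g₁' (g₂' (g₂ (g₁ x))) = x; rw [he, hb], hf.trans hc⟩
    · intro y hy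
      obtain ⟨ha, hb⟩ := H₂' y hy
      obtain ⟨hc, hd⟩ := H₁' _ ha
      exact ⟨hc, by show g₂ (g₁ (g₁' (g₂' y))) = y; rw [hd, hb]⟩

lemma compact_of_perm {L L' : FlatLayout} (h : L.Perm L') (hC : Compact L') : Compact L := by
  obtain ⟨g, g', hg, hg'⟩ := phi_perm h
  have hC' : Set.BijOn (phi L') {x | x < size L'} {y | y < cosize L'} := hC
  have hcz := cosize_perm h
  refine ⟨?_, ?_, ?_⟩
  · intro x hx
    simp only [Set.mem_setOf_eq] at hx ⊢
    obtain ⟨h1, _, h3⟩ := hg x hx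
    rw [hcz, ← h3]
    exact hC'.mapsTo h1
  · intro x hx y hy hxy
    simp only [Set.mem_setOf_eq] at hx hy
    obtain ⟨hx1, hx2, hx3⟩ := hg x hx
    obtain ⟨hy1, hy2, hy3⟩ := hg y hy
    have : phi L' (g x) = phi L' (g y) := by rw [hx3, hy3]; exact hxy
    have := hC'.injOn hx1 hy1 this
    rw [← hx2, ← hy2, this]
  · intro y hy
    simp only [Set.mem_setOf_eq] at hy
    rw [hcz] at hy
    obtain ⟨z, hz, hzy⟩ := hC'.surjOn hy
    simp only [Set.mem_setOf_eq] at hz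
    obtain ⟨h1, h2⟩ := hg' z hz
    obtain ⟨_, _, h3⟩ := hg _ h1
    refine ⟨g' z, h1, ?_⟩
    rw [← h3, h2]
    exact hzy

lemma compact_iff_perm {L L' : FlatLayout} (h : L.Perm L') : Compact L ↔ Compact L' :=
  ⟨fun c => compact_of_perm h.symm c, fun c => compact_of_perm h c⟩

end FLAux
namespace FLAux

lemma compact_congr {L L' : FlatLayout} (hphi : ∀ x, phi L x = phi L' x)
    (hsz : size L = size L') (hcz : cosize L = cosize L') : Compact L ↔ Compact L' := by
  unfold Compact
  rw [funext hphi, hsz, hcz]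

lemma compact_one_cons (d : ℕ) (X : FlatLayout) : Compact ((1, d) :: X) ↔ Compact X := by
  refine compact_congr (fun x => ?_) (by rw [size_cons, one_mul]) (by simp [cosize])
  simp [phi, Nat.mod_one]

lemma compact_merge (s s' d : ℕ) (M : FlatLayout) (hs : 0 < s) (hs' : 0 < s') :
    Compact ((s, d) :: (s', s * d) :: M) ↔ Compact ((s * s', d) :: M) := by
  refine compact_congr (fun x => ?_) ?_ ?_
  · simp only [phi]
    rw [Nat.mod_mul, ← Nat.div_div_eq_div_mul]
    ring
  · rw [size_cons, size_cons, size_cons, mul_assoc]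
  · obtain ⟨a, rfl⟩ : ∃ a, s = a + 1 := ⟨s - 1, by omega⟩
    obtain ⟨b, rfl⟩ : ∃ b, s' = b + 1 := ⟨s' - 1, by omega⟩
    have h1 : (a + 1) * (b + 1) - 1 = a * b + a + b := by
      rw [Nat.succ_mul, Nat.mul_succ]; omega
    simp only [cosize, List.map_cons, List.sum_cons, Nat.add_sub_cancel, h1]
    ring

lemma ones_append (ones : FlatLayout) (h1 : ∀ p ∈ ones, p.1 = 1) :
    ∀ X : FlatLayout, Compact (X ++ ones) ↔ Compact X := by
  induction ones with
  | nil => intro X; rw [List.append_nil]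
  | cons o rest ih =>
    intro X
    have ho : o.1 = 1 := h1 o (List.mem_cons_self)
    have hperm : (X ++ o :: rest).Perm (o :: (X ++ rest)) := List.perm_middle
    rw [compact_iff_perm hperm]
    obtain ⟨o1, o2⟩ := o
    simp only at ho
    subst ho
    rw [compact_one_cons]
    exact ih (fun p hp => h1 p (List.mem_cons_of_mem _ hp)) X

lemma compact_squeeze (L : FlatLayout) : Compact L ↔ Compact (squeeze L) := by
  have hperm : (squeeze L ++ L.filter (fun p => !(p.1 != 1))).Perm L :=
    List.filter_append_perm _ L
  rw [compact_iff_perm hperm.symm]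
  exact ones_append _ (fun p hp => by
    have := List.of_mem_filter hp
    simpa using this) _

/-- Telescoping layouts: stride chain `r, s₁r, s₁s₂r, …`. -/
def Tel : FlatLayout → ℕ → Prop
  | [], _ => True
  | (s, d) :: t, r => d = r ∧ Tel t (s * r)

lemma tel_sorted : ∀ (M : FlatLayout) (r : ℕ), Tel M r → 0 < r → (∀ p ∈ M, 2 ≤ p.1) →
    M.Chain' ModeLE := by
  intro M
  induction M with
  | nil => intro r _ _ _; exact List.isChain_nil
  | cons p t ih =>
    obtain ⟨s, d⟩ := p
    intro r hT hr hsh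
    obtain ⟨hd, hT'⟩ := hT
    have hs : 2 ≤ s := hsh _ (List.mem_cons_self)
    have htail := ih (s * r) hT' (by positivity) (fun p hp => hsh p (List.mem_cons_of_mem _ hp))
    cases t with
    | nil => simp [List.Chain']
    | cons q t' =>
      obtain ⟨s', d'⟩ := q
      apply List.isChain_cons_cons.mpr
      refine ⟨?_, htail⟩
      have hd' : d' = s * r := hT'.1
      left
      simp only [hd, hd']
      nlinarith

lemma phi_lb : ∀ (M : FlatLayout) (c : ℕ), (∀ p ∈ M, c ≤ p.2) → ∀ x,
    phi M x = 0 ∨ c ≤ phi M x := by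
  intro M
  induction M with
  | nil => intro c _ x; left; rfl
  | cons p t ih =>
    obtain ⟨s, d⟩ := p
    intro c hc x
    have hd : c ≤ d := hc _ (List.mem_cons_self)
    simp only [phi]
    rcases ih c (fun p hp => hc p (List.mem_cons_of_mem _ hp)) (x / s) with h | h
    · rcases Nat.eq_zero_or_pos (x % s) with h0 | h0
      · left; rw [h, h0]; ring
      · right
        have : d ≤ x % s * d := Nat.le_mul_of_pos_left d h0
        omega
    · right; omega

end FLAux
namespace FLAux

lemma size_pos {M : FlatLayout} (h : ∀ p ∈ M, 2 ≤ p.1) : 0 < size M := by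
  apply List.prod_pos
  intro a ha
  obtain ⟨p, hp, rfl⟩ := List.mem_map.mp ha
  have := h p hp
  omega

lemma compact_sorted_tel_aux : ∀ (n : ℕ) (M : FlatLayout), M.length ≤ n →
    M.Chain' ModeLE → (∀ p ∈ M, 2 ≤ p.1) → Compact M → Tel M 1 := by
  intro n
  induction n with
  | zero =>
    intro M hlen _ _ _
    have : M = [] := List.eq_nil_of_length_eq_zero (by omega)
    subst this
    trivial
  | succ n ih =>
    intro M hlen hsort hsh hC
    cases M with
    | nil => trivial
    | cons p rest =>
      obtain ⟨s₁, d₁⟩ := p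
      have hCb : Set.BijOn (phi ((s₁, d₁) :: rest)) {x | x < size ((s₁, d₁) :: rest)}
          {y | y < cosize ((s₁, d₁) :: rest)} := hC
      have hs₁ : 2 ≤ s₁ := hsh _ (List.mem_cons_self)
      have hKpos : 0 < size rest := size_pos (fun p hp => hsh p (List.mem_cons_of_mem _ hp))
      have hsizeM : size ((s₁, d₁) :: rest) = s₁ * size rest := size_cons _ _ _
      have hsize2 : 2 ≤ size ((s₁, d₁) :: rest) := by
        rw [hsizeM]
        calc 2 = 2 * 1 := by omega
          _ ≤ s₁ * size rest := Nat.mul_le_mul hs₁ hKpos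
      have hcz : cosize ((s₁, d₁) :: rest) = size ((s₁, d₁) :: rest) :=
        (compact_size_eq_cosize hC).symm
      have hpair : List.Pairwise ModeLE ((s₁, d₁) :: rest) := List.isChain_iff_pairwise.mp hsort
      -- Step 1 : d₁ = 1
      have hd₁ : d₁ = 1 := by
        rcases Nat.lt_or_ge d₁ 1 with h0 | h1
        · -- d₁ = 0
        
          exfalso
          have hd0 : d₁ = 0 := by omega
          subst hd0
          have e1 : phi ((s₁, 0) :: rest) 1 = 0 := by
            simp [phi, Nat.div_eq_of_lt (show 1 < s₁ by omega), phi_zero]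
          have e0 : phi ((s₁, 0) :: rest) 0 = 0 := phi_zero _
          have h01 := hCb.injOn (show (0:ℕ) ∈ {x | x < size ((s₁,0)::rest)} by
              simp only [Set.mem_setOf_eq]; omega)
            (show (1:ℕ) ∈ {x | x < size ((s₁,0)::rest)} by
              simp only [Set.mem_setOf_eq]; omega)
            (e0.trans e1.symm)
          omega
        rcases Nat.lt_or_ge 1 d₁ with h2 | h2
        swap
        · omega
        -- d₁ ≥ 2 : contradiction with surjectivity at value 1
        exfalso
        obtain ⟨x, hx, hphix⟩ := hCb.surjOn (show (1:ℕ) ∈ {y | y < cosize ((s₁,d₁)::rest)} by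
          simp only [Set.mem_setOf_eq]; omega)
        have hlb : ∀ p ∈ (s₁, d₁) :: rest, d₁ ≤ p.2 := by
          intro p hp
          rcases List.mem_cons.mp hp with rfl | hp'
          · exact le_refl _
          · have := (List.pairwise_cons.mp hpair).1 p hp'
            unfold ModeLE at this
            omega
        rcases phi_lb _ d₁ hlb x with h | h <;> omega
      subst hd₁
      -- Step 2 : case on rest
      cases rest with
      | nil => exact ⟨rfl, trivial⟩
      | cons q M₃ =>
        obtain ⟨s₂, d₂⟩ := q
        have hs₂ : 2 ≤ s₂ := hsh _ (List.mem_cons_of_mem _ (List.mem_cons_self))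
        have hK₃ : 0 < size M₃ := size_pos (fun p hp =>
          hsh p (List.mem_cons_of_mem _ (List.mem_cons_of_mem _ hp)))
        have hsM : size ((s₁,1) :: (s₂,d₂) :: M₃) = s₁ * (s₂ * size M₃) := by
          rw [size_cons, size_cons]
        have hs₁lt : s₁ < size ((s₁,1) :: (s₂,d₂) :: M₃) := by
          rw [hsM]
          rw [Nat.lt_mul_iff_one_lt_right (show 0 < s₁ by omega)]
          calc 1 < 2 * 1 := by omega
            _ ≤ s₂ * size M₃ := Nat.mul_le_mul hs₂ hK₃
        have hchain1 : ModeLE (s₁, 1) (s₂, d₂) := (List.isChain_cons_cons.mp hsort).1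
        have hd₂1 : 1 ≤ d₂ := by unfold ModeLE at hchain1; simp only at hchain1; omega
        have hd₂ : d₂ = s₁ := by
          rcases lt_trichotomy d₂ s₁ with hlt | heq | hgt
          · exfalso
            have e1 : phi ((s₁,1) :: (s₂,d₂) :: M₃) d₂ = d₂ := by
              simp [phi, Nat.mod_eq_of_lt hlt, Nat.div_eq_of_lt hlt, phi_zero]
            have e2 : phi ((s₁,1) :: (s₂,d₂) :: M₃) s₁ = d₂ := by
              have h1s₂ : 1 < s₂ := by omega
              simp [phi, Nat.mod_self, Nat.div_self (show 0 < s₁ by omega),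
                Nat.mod_eq_of_lt h1s₂, Nat.div_eq_of_lt h1s₂, phi_zero]
            have := hCb.injOn (show d₂ ∈ {x | x < size ((s₁,1)::(s₂,d₂)::M₃)} by
                simp only [Set.mem_setOf_eq]; omega)
              (show s₁ ∈ {x | x < size ((s₁,1)::(s₂,d₂)::M₃)} by
                simp only [Set.mem_setOf_eq]; exact hs₁lt)
              (e1.trans e2.symm)
            omega
          · exact heq
          · exfalso
            obtain ⟨x, hx, hphix⟩ := hCb.surjOn
              (show s₁ ∈ {y | y < cosize ((s₁,1)::(s₂,d₂)::M₃)} by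
                simp only [Set.mem_setOf_eq]; omega)
            have hpair' : List.Pairwise ModeLE ((s₂,d₂) :: M₃) :=
              (List.pairwise_cons.mp hpair).2
            have hlb : ∀ p ∈ (s₂, d₂) :: M₃, d₂ ≤ p.2 := by
              intro p hp
              rcases List.mem_cons.mp hp with rfl | hp'
              · exact le_refl _
              · have := (List.pairwise_cons.mp hpair').1 p hp'
                unfold ModeLE at this
                omega
            have hphi : phi ((s₁,1) :: (s₂,d₂) :: M₃) x
                = x % s₁ + phi ((s₂,d₂) :: M₃) (x / s₁) := by
              simp [phi]
            have hmod : x % s₁ < s₁ := Nat.mod_lt _ (by omega)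
            rcases phi_lb _ d₂ hlb (x / s₁) with h | h <;> omega
        subst hd₂
        -- Step 3 : merge the first two modes and use the induction hypothesis
        -- After `subst hd₂`, `s₁` has been replaced by `d₂` everywhere.
        have hC' : Compact ((d₂,1) :: (s₂, d₂ * 1) :: M₃) := by rw [mul_one]; exact hC
        have hC₂ : Compact ((d₂ * s₂, 1) :: M₃) :=
          (compact_merge d₂ s₂ 1 M₃ (by omega) (by omega)).mp hC'
        have hsort₂ : ((d₂ * s₂, 1) :: M₃).Chain' ModeLE := by
          cases M₃ with
          | nil => simp [List.Chain']
          | cons m M₄ =>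
            apply List.isChain_cons_cons.mpr
            constructor
            · have h2 : ModeLE (s₂, d₂) m := (List.isChain_cons_cons.mp (List.isChain_cons_cons.mp hsort).2).1
              unfold ModeLE at h2 ⊢
              simp only at h2 ⊢
              omega
            · exact (List.isChain_cons_cons.mp (List.isChain_cons_cons.mp hsort).2).2
        have hsh₂ : ∀ p ∈ (d₂ * s₂, 1) :: M₃, 2 ≤ p.1 := by
          intro p hp
          rcases List.mem_cons.mp hp with rfl | hp'
          · simp only; nlinarith
          · exact hsh p (List.mem_cons_of_mem _ (List.mem_cons_of_mem _ hp'))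
        have hlen₂ : ((d₂ * s₂, 1) :: M₃).length ≤ n := by
          simp only [List.length_cons] at hlen ⊢
          omega
        obtain ⟨-, hT₃⟩ := ih _ hlen₂ hsort₂ hsh₂ hC₂
        refine ⟨rfl, (mul_one d₂).symm, ?_⟩
        have : s₂ * (d₂ * 1) = d₂ * s₂ * 1 := by ring
        rw [this]
        exact hT₃

lemma compact_sorted_tel {M : FlatLayout} (hsort : M.Chain' ModeLE)
    (hsh : ∀ p ∈ M, 2 ≤ p.1) (hC : Compact M) : Tel M 1 :=
  compact_sorted_tel_aux M.length M (le_refl _) hsort hsh hC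

lemma sortL_sorted (L : FlatLayout) : (sortL L).Chain' ModeLE := by
  have h := List.pairwise_mergeSort (le := fun p q => decide (ModeLE p q))
    (fun a b c hab hbc => by
      have h1 : ModeLE a b := of_decide_eq_true hab
      have h2 : ModeLE b c := of_decide_eq_true hbc
      exact decide_eq_true (Trans.trans h1 h2))
    (fun a b => by
      rcases (show ModeLE a b ∨ ModeLE b a by unfold ModeLE; omega) with h | h
      · simp [decide_eq_true h]
      · simp [decide_eq_true h]) L
  apply List.isChain_iff_pairwise.mpr
  exact h.imp (fun hab => of_decide_eq_true hab)

end FLAux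
namespace FLAux

lemma head_split {x : ℕ × ℕ} {M' A₁ B₁ : FlatLayout}
    (hM : (x :: M').Chain' ModeLE) (hA : A₁.Chain' ModeLE) (hB : B₁.Chain' ModeLE)
    (hp : (x :: M').Perm (A₁ ++ B₁)) :
    (∃ A', A₁ = x :: A' ∧ M'.Perm (A' ++ B₁)) ∨
    (∃ B', B₁ = x :: B' ∧ M'.Perm (A₁ ++ B')) := by
  have hMp : List.Pairwise ModeLE (x :: M') := List.isChain_iff_pairwise.mp hM
  have hx : x ∈ A₁ ++ B₁ := hp.subset (List.mem_cons_self)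
  rcases List.mem_append.mp hx with hxa | hxb
  · left
    cases A₁ with
    | nil => cases hxa
    | cons a A' =>
      have hAp : List.Pairwise ModeLE (a :: A') := List.isChain_iff_pairwise.mp hA
      have hax : a = x := by
        have h1 : ModeLE a x := by
          rcases List.mem_cons.mp hxa with rfl | hxA'
          · exact modeLE_refl _
          · exact (List.pairwise_cons.mp hAp).1 x hxA'
        have h2 : ModeLE x a := by
          have ha' : a ∈ x :: M' := hp.symm.subset (List.mem_append_left _ (List.mem_cons_self))
          rcases List.mem_cons.mp ha' with rfl | haM'
          · exact modeLE_refl _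
          · exact (List.pairwise_cons.mp hMp).1 a haM'
        exact antisymm h1 h2
      subst hax
      refine ⟨A', rfl, ?_⟩
      have : (a :: M').Perm (a :: (A' ++ B₁)) := by
        simpa using hp
      exact this.cons_inv
  · right
    cases B₁ with
    | nil => cases hxb
    | cons b B' =>
      have hBp : List.Pairwise ModeLE (b :: B') := List.isChain_iff_pairwise.mp hB
      have hbx : b = x := by
        have h1 : ModeLE b x := by
          rcases List.mem_cons.mp hxb with rfl | hxB'
          · exact modeLE_refl _
          · exact (List.pairwise_cons.mp hBp).1 x hxB'
        have h2 : ModeLE x b := by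
          have hb' : b ∈ x :: M' := hp.symm.subset (List.mem_append_right _ (List.mem_cons_self))
          rcases List.mem_cons.mp hb' with rfl | hbM'
          · exact modeLE_refl _
          · exact (List.pairwise_cons.mp hMp).1 b hbM'
        exact antisymm h1 h2
      subst hbx
      refine ⟨B', rfl, ?_⟩
      have : (b :: M').Perm (b :: (A₁ ++ B')) :=
        hp.trans List.perm_middle
      exact this.cons_inv

/-- The expected complement, peeled recursively: current accumulated stride `r`. -/
def cexp : FlatLayout → ℕ → ℕ → FlatLayout
  | [], r, N => if N / r = 1 then [] else [(N / r, r)]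
  | (s, d) :: t, r, N => if d / r = 1 then cexp t (s * d) N else (d / r, r) :: cexp t (s * d) N

lemma core : ∀ (M : FlatLayout) (r : ℕ) (A₁ B₁ : FlatLayout),
    0 < r → Tel M r →
    (∀ p ∈ A₁, 2 ≤ p.1) → A₁.Chain' ModeLE →
    (∀ p ∈ B₁, 2 ≤ p.1) → B₁.Chain' ModeLE →
    B₁.Chain' (fun p q => p.1 * p.2 ≠ q.2) →
    M.Perm (A₁ ++ B₁) → B₁ = cexp A₁ r (r * size M) := by
  intro M
  induction M with
  | nil =>
    intro r A₁ B₁ hr _ _ _ _ _ _ hp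
    have h0 : A₁ ++ B₁ = [] := List.Perm.eq_nil hp.symm
    obtain ⟨hA0, hB0⟩ := List.append_eq_nil_iff.mp h0
    subst hA0; subst hB0
    simp [cexp, size, Nat.div_self hr]
  | cons m M' ih =>
    obtain ⟨σ, e⟩ := m
    intro r A₁ B₁ hr hT hA2 hAs hB2 hBs hBc hp
    have he : e = r := hT.1
    subst e
    have hT' : Tel M' (σ * r) := hT.2
    have hσ2 : 2 ≤ σ := by
      have : (σ, r) ∈ A₁ ++ B₁ := hp.subset (List.mem_cons_self)
      rcases List.mem_append.mp this with h | h
      · exact hA2 _ h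
      · exact hB2 _ h
    have hσr : 0 < σ * r := by positivity
    have hshapesM : ∀ p ∈ (σ, r) :: M', 2 ≤ p.1 := by
      intro p hpm
      rcases List.mem_append.mp (hp.subset hpm) with h | h
      · exact hA2 _ h
      · exact hB2 _ h
    have hMs : ((σ, r) :: M').Chain' ModeLE := tel_sorted _ r ⟨rfl, hT'⟩ hr hshapesM
    have hNe : r * size ((σ, r) :: M') = (σ * r) * size M' := by
      rw [size_cons]; ring
    rcases head_split hMs hAs hBs hp with ⟨A', rfl, hp'⟩ | ⟨B', rfl, hp'⟩
    · -- head comes from A₁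
      have hrec := ih (σ * r) A' B₁ hσr hT'
        (fun p hp'' => hA2 p (List.mem_cons_of_mem _ hp'')) hAs.tail hB2 hBs hBc hp'
      rw [hNe]
      simp only [cexp, Nat.div_self hr, if_pos rfl]
      exact hrec
    · -- head comes from B₁
      cases A₁ with
      | nil =>
        have hM'B' : M' = B' := by
          exact List.Perm.eq_of_pairwise' (r := ModeLE)
            (List.isChain_iff_pairwise.mp hMs.tail) (List.isChain_iff_pairwise.mp hBs.tail) (by simpa using hp')
        subst hM'B'
        cases M' with
        | nil =>
          have hsz : r * size ((σ, r) :: ([] : FlatLayout)) = r * σ := by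
            rw [size_cons, size_nil, mul_one]
          rw [hsz]
          simp only [cexp]
          rw [Nat.mul_div_cancel_left σ hr, if_neg (by omega)]
        | cons m2 M'' =>
          exfalso
          obtain ⟨τ, e₂⟩ := m2
          have he₂ : e₂ = σ * r := hT'.1
          have hne := (List.isChain_cons_cons.mp hBc).1
          simp only at hne
          exact hne he₂.symm
      | cons a A'' =>
        obtain ⟨s, d⟩ := a
        cases M' with
        | nil =>
          exfalso
          have h0 := List.Perm.eq_nil hp'.symm
          simp at h0
        | cons m2 M'' =>
          obtain ⟨τ, e₂⟩ := m2
          have he₂ : e₂ = σ * r := hT'.1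
          subst he₂
          rcases head_split hMs.tail hAs (show B'.Chain' ModeLE from hBs.tail) hp' with ⟨A₃, hA₃, _⟩ | ⟨B₃, hB₃, _⟩
          · injection hA₃ with h1 h2
            have hd' : d = σ * r := congrArg Prod.snd h1
            subst hd'
            have hrec := ih (σ * r) ((s, σ * r) :: A'') B' hσr hT' hA2 hAs
              (fun p hp'' => hB2 p (List.mem_cons_of_mem _ hp'')) hBs.tail hBc.tail hp'
            rw [hNe]
            simp only [cexp]
            rw [Nat.mul_div_cancel σ hr, if_neg (by omega)]
            congr 1
            rw [hrec]
            simp [cexp, Nat.div_self hσr]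
          · exfalso
            rw [hB₃] at hBc
            have hne := (List.isChain_cons_cons.mp hBc).1
            simp only at hne
            exact hne rfl

end FLAux
namespace FLAux

/-- Unfiltered complement modes, peeled recursively. -/
def go : FlatLayout → ℕ → ℕ → FlatLayout
  | [], r, N => [(N / r, r)]
  | (s, d) :: t, r, N => (d / r, r) :: go t (s * d) N

lemma cexp_eq_filter : ∀ (l : FlatLayout) (r N : ℕ),
    cexp l r N = (go l r N).filter (fun p => p.1 != 1) := by
  intro l
  induction l with
  | nil =>
    intro r N
    by_cases h : N / r = 1 <;> simp [cexp, go, List.filter_cons, h]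
  | cons p t ih =>
    obtain ⟨s, d⟩ := p
    intro r N
    by_cases h : d / r = 1 <;> simp [cexp, go, List.filter_cons, h, ih]

lemma go_eq (N : ℕ) : ∀ (t : FlatLayout) (s d : ℕ),
    go t (s * d) N = (((s, d) :: t).zip t).map
        (fun pq => (pq.2.2 / (pq.1.1 * pq.1.2), pq.1.1 * pq.1.2))
      ++ [(N / ((((s, d) :: t).getLast (by simp)).1 * (((s, d) :: t).getLast (by simp)).2),
           (((s, d) :: t).getLast (by simp)).1 * (((s, d) :: t).getLast (by simp)).2)] := by
  intro t
  induction t with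
  | nil => intro s d; simp [go]
  | cons q t' ih =>
    obtain ⟨s', d'⟩ := q
    intro s d
    have h1 : go ((s', d') :: t') (s * d) N = (d' / (s * d), s * d) :: go t' (s' * d') N := rfl
    rw [h1, ih s' d']
    have h2 : (((s, d) :: (s', d') :: t').getLast (by simp))
        = (((s', d') :: t').getLast (by simp)) := List.getLast_cons (by simp)
    rw [h2]
    simp [List.zip_cons_cons]

lemma compNModes_eq_go (l : FlatLayout) (hl : l ≠ []) (N : ℕ) : compNModes l N = go l 1 N := by
  cases l with
  | nil => exact absurd rfl hl
  | cons p t =>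
    obtain ⟨s, d⟩ := p
    have hg := List.getLast?_eq_getLast (l := (s, d) :: t) (by simp)
    rcases hq : ((s, d) :: t).getLast (by simp) with ⟨sm, dm⟩
    rw [hq] at hg
    have hcm : compNModes ((s, d) :: t) N
        = compModes ((s, d) :: t) ++ [(N / (sm * dm), sm * dm)] := by
      simp only [compNModes, hg]
    rw [hcm]
    have hcompModes : compModes ((s, d) :: t)
        = (d, 1) :: (((s, d) :: t).zip t).map
            (fun pq => (pq.2.2 / (pq.1.1 * pq.1.2), pq.1.1 * pq.1.2)) := rfl
    rw [hcompModes]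
    have hgo : go ((s, d) :: t) 1 N = (d / 1, 1) :: go t (s * d) N := rfl
    rw [hgo, Nat.div_one, go_eq N t s d, hq]
    simp

/-- Strengthened no-coalescing relation. -/
def Rgood (p q : ℕ × ℕ) : Prop := p.1 * p.2 < q.2 ∧ 1 ≤ q.1

instance : IsTrans (ℕ × ℕ) Rgood := by
  constructor
  rintro a b c ⟨h1, h2⟩ ⟨h3, h4⟩
  refine ⟨?_, h4⟩
  nlinarith

lemma go_chain : ∀ (l : FlatLayout) (r N : ℕ), 0 < r → 0 < N →
    (∀ p ∈ l, 2 ≤ p.1) → (∀ p ∈ l, 0 < p.2) →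
    l.Chain' (fun p q => p.1 * p.2 ∣ q.2) →
    (∀ p, l.head? = some p → r ∣ p.2) → (l = [] → r ∣ N) →
    (∀ p, l.getLast? = some p → p.1 * p.2 ∣ N) →
    (go l r N).Chain' Rgood := by
  intro l
  induction l with
  | nil => intro r N _ _ _ _ _ _ _ _; simp [go, List.Chain']
  | cons p t ih =>
    obtain ⟨s, d⟩ := p
    intro r N hr hN hsh hstr hdvd hhead hnil hlast
    have hs : 2 ≤ s := hsh _ (List.mem_cons_self)
    have hd : 0 < d := hstr _ (List.mem_cons_self)
    have hrd : r ∣ d := hhead _ rfl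
    have hdlt : d < s * d := by nlinarith
    have hgo : go ((s, d) :: t) r N = (d / r, r) :: go t (s * d) N := rfl
    rw [hgo]
    have htail : (go t (s * d) N).Chain' Rgood := by
      apply ih (s * d) N (by positivity) hN
        (fun p hp => hsh p (List.mem_cons_of_mem _ hp))
        (fun p hp => hstr p (List.mem_cons_of_mem _ hp))
        hdvd.tail
      · intro p hp
        cases t with
        | nil => cases hp
        | cons q t' =>
          have : q = p := by simpa using hp
          subst this
          exact (List.isChain_cons_cons.mp hdvd).1
      · intro ht
        subst ht
        exact hlast _ rfl
      · intro p hp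
        cases t with
        | nil => cases hp
        | cons q t' => exact hlast p (by rw [List.getLast?_cons_cons]; exact hp)
    apply List.isChain_cons.mpr ⟨?_, htail⟩
    intro y hy
    have hdr : d / r * r = d := Nat.div_mul_cancel hrd
    cases t with
    | nil =>
      have hy' : (N / (s * d), s * d) = y := by simpa [go] using hy
      subst hy'
      have hsdN : s * d ∣ N := hlast _ rfl
      refine ⟨by simpa [hdr] using hdlt, ?_⟩
      have : s * d ≤ N := Nat.le_of_dvd hN hsdN
      have hsd : 0 < s * d := by positivity
      exact (Nat.one_le_div_iff hsd).mpr this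
    | cons q t' =>
      obtain ⟨s', d'⟩ := q
      have hy' : (d' / (s * d), s * d) = y := by simpa [go] using hy
      subst hy'
      have hdvd' : s * d ∣ d' := (List.isChain_cons_cons.mp hdvd).1
      have hd' : 0 < d' := hstr _ (List.mem_cons_of_mem _ (List.mem_cons_self))
      refine ⟨by simpa [hdr] using hdlt, ?_⟩
      have : s * d ≤ d' := Nat.le_of_dvd hd' hdvd'
      have hsd : 0 < s * d := by positivity
      exact (Nat.one_le_div_iff hsd).mpr this

lemma coalAux_eq_self : ∀ l : FlatLayout, l.Chain' (fun p q => p.1 * p.2 ≠ q.2) →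
    coalAux l = l := by
  intro l
  induction l with
  | nil => intro _; rfl
  | cons p t ih =>
    intro h
    cases t with
    | nil => simp [coalAux]
    | cons q t' =>
      have hne := (List.isChain_cons_cons.mp h).1
      have ht := ih (List.isChain_cons_cons.mp h).2
      have hstep : coalAux (p :: q :: t') =
          match coalAux (q :: t') with
          | [] => [p]
          | q' :: rest' =>
            if p.1 * p.2 = q'.2 then (p.1 * q'.1, p.2) :: rest' else p :: q' :: rest' := rfl
      rw [hstep, ht]
      simp [hne]

lemma coal_go_eq_cexp (l : FlatLayout) (r N : ℕ) (hchain : (go l r N).Chain' Rgood) :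
    coal (go l r N) = cexp l r N := by
  have hpair : (go l r N).Pairwise Rgood := List.isChain_iff_pairwise.mp hchain
  have hfilter : ((go l r N).filter (fun p => p.1 != 1)).Pairwise Rgood :=
    List.Pairwise.sublist (List.filter_sublist) hpair
  have hchain' : ((go l r N).filter (fun p => p.1 != 1)).Chain'
      (fun p q => p.1 * p.2 ≠ q.2) :=
    hfilter.isChain.imp (fun a b h => Nat.ne_of_lt h.1)
  have hsq : squeeze (go l r N) = (go l r N).filter (fun p => p.1 != 1) := rfl
  rw [coal, hsq, coalAux_eq_self _ hchain', cexp_eq_filter]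

lemma strides_pos : ∀ (l : FlatLayout) (N : ℕ), 0 < N → (∀ p ∈ l, 0 < p.1) →
    l.Chain' (fun p q => p.1 * p.2 ∣ q.2) →
    (∀ p, l.getLast? = some p → p.1 * p.2 ∣ N) → ∀ p ∈ l, 0 < p.2 := by
  intro l
  induction l with
  | nil => intro N _ _ _ _ p hp; cases hp
  | cons a t ih =>
    intro N hN hsh hch hlast p hp
    cases t with
    | nil =>
      have hpa : p = a := by simpa using hp
      subst hpa
      have h1 : p.1 * p.2 ∣ N := hlast _ rfl
      rcases Nat.eq_zero_or_pos p.2 with h0 | h0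
      · exfalso
        rw [h0, mul_zero] at h1
        have := Nat.eq_zero_of_zero_dvd h1
        omega
      · exact h0
    | cons b t' =>
      have hbt : ∀ p ∈ b :: t', 0 < p.2 := by
        apply ih N hN (fun p hp => hsh p (List.mem_cons_of_mem _ hp)) hch.tail
        intro p hp
        exact hlast p (by rw [List.getLast?_cons_cons]; exact hp)
      rcases List.mem_cons.mp hp with rfl | hp'
      · have h1 : p.1 * p.2 ∣ b.2 := (List.isChain_cons_cons.mp hch).1
        have h2 : 0 < b.2 := hbt b (List.mem_cons_self)
        rcases Nat.eq_zero_or_pos p.2 with h0 | h0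
        · exfalso
          rw [h0, mul_zero] at h1
          have := Nat.eq_zero_of_zero_dvd h1
          omega
        · exact h0
      · exact hbt p hp'

end FLAux
namespace FLAux

lemma compN_bridge (l : FlatLayout) (N : ℕ) (hN : 0 < N)
    (hchain : l.Chain' (fun p q => p.1 * p.2 ∣ q.2))
    (hlast : ∀ p, l.getLast? = some p → p.1 * p.2 ∣ N)
    (h2 : ∀ p ∈ l, 2 ≤ p.1) :
    coal (compNModes l N) = cexp l 1 N := by
  have hstr : ∀ p ∈ l, 0 < p.2 :=
    strides_pos l N hN (fun p hp => by have := h2 p hp; omega) hchain hlast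
  cases l with
  | nil =>
    have h1 : compNModes ([] : FlatLayout) N = [(N, 1)] := rfl
    rw [h1]
    by_cases hN1 : N = 1
    · subst hN1
      rfl
    · have hsq : squeeze [(N, 1)] = [(N, 1)] := by
        simp [squeeze, List.filter_cons, hN1]
      rw [coal, hsq]
      have h3 : coalAux [(N, 1)] = [(N, 1)] := rfl
      rw [h3]
      simp [cexp, hN1]
  | cons p t =>
    rw [compNModes_eq_go _ (by simp) N]
    apply coal_go_eq_cexp
    apply go_chain _ 1 N one_pos hN h2 hstr hchain
    · intro q _; exact one_dvd _
    · intro _; exact one_dvd _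
    · exact hlast

end FLAux

namespace FLAux
lemma sortL_perm (L : FlatLayout) : (sortL L).Perm L := List.mergeSort_perm _ _
end FLAux
open FlatLayout in
theorem NComplement_unique (A B : FlatLayout) (N : ℕ) (hN : 0 < N) (hA : A.Valid)
    (hc : NComplementable A N) (hB : B.Valid) (h1 : IsNComplement A B N)
    (h2 : Coalesced B) (h3 : Sorted B) :
    B = compN A N := by
  have hA'2 : ∀ p ∈ sortL (squeeze A), 2 ≤ p.1 := by
    intro p hp
    have hp1 : p ∈ squeeze A := (FLAux.sortL_perm (squeeze A)).subset hp
    have hb1 := List.of_mem_filter hp1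
    have hb2 : p ∈ A := List.mem_of_mem_filter hp1
    have := hA p hb2
    simp only [bne_iff_ne, ne_eq] at hb1
    omega
  have hA's : (sortL (squeeze A)).Chain' ModeLE := FLAux.sortL_sorted _
  have hB2 : ∀ p ∈ B, 2 ≤ p.1 := by
    intro p hp
    have := hB p hp
    have := h2.1 p hp
    omega
  have hsqB : squeeze B = B := by
    apply List.filter_eq_self.mpr
    intro p hp
    simpa using h2.1 p hp
  have hMperm : (sortL (squeeze (A ++ B))).Perm (sortL (squeeze A) ++ B) := by
    have ha : (sortL (squeeze (A ++ B))).Perm (squeeze (A ++ B)) := FLAux.sortL_perm _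
    have hb : squeeze (A ++ B) = squeeze A ++ B := by
      unfold squeeze at hsqB ⊢
      rw [List.filter_append, hsqB]
    have hc' : (squeeze (A ++ B)).Perm (sortL (squeeze A) ++ B) := by
      rw [hb]
      exact (FLAux.sortL_perm (squeeze A)).symm.append_right B
    exact ha.trans hc' 
  have hMshapes : ∀ p ∈ sortL (squeeze (A ++ B)), 2 ≤ p.1 := by
    intro p hp
    rcases List.mem_append.mp (hMperm.subset hp) with h | h
    · exact hA'2 p h
    · exact hB2 p h
  have hMsorted := FLAux.sortL_sorted (squeeze (A ++ B))
  have hMcompact : Compact (sortL (squeeze (A ++ B))) := by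
    have h0 : Compact (A ++ B) := h1.1
    rw [FLAux.compact_squeeze] at h0
    exact FLAux.compact_of_perm (FLAux.sortL_perm _) h0
  have hTel := FLAux.compact_sorted_tel hMsorted hMshapes hMcompact
  have hszM : size (sortL (squeeze (A ++ B))) = N := by
    rw [FLAux.size_perm (FLAux.sortL_perm _), FLAux.size_squeeze, FLAux.size_append]
    exact h1.2
  have hcore := FLAux.core _ 1 (sortL (squeeze A)) B one_pos hTel hA'2 hA's hB2 h3 h2.2 hMperm
  rw [one_mul, hszM] at hcore
  rw [hcore]
  exact (FLAux.compN_bridge (sortL (squeeze A)) N hN hc.1 hc.2 hA'2).symm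
end

section
/- A flat layout L can be encoded by a tuple morphism (i.e., there exists a tuple morphism f with L_f = L) if and only if L is tractable. -/
/-- A tuple morphism `f : (s₁,…,sₘ) → (t₁,…,tₙ)` between tuples of positive integers:
a function `α : {1,…,m} → {*,1,…,n}` (with `*` encoded by `none`) such that no element of
`{1,…,n}` has more than one preimage, and `sᵢ = t_{α(i)}` whenever `α(i) ≠ *`. -/
structure TupleMorphism where
  /-- the domain tuple `(s₁,…,sₘ)` -/
  dom : List ℕ
  /-- the codomain tuple `(t₁,…,tₙ)` -/
  cod : List ℕ
  dom_pos : ∀ s ∈ dom, 0 < s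
  cod_pos : ∀ t ∈ cod, 0 < t
  /-- the underlying function `α` -/
  map : Fin dom.length → Option (Fin cod.length)
  inj : ∀ i j k, map i = some k → map j = some k → i = j
  compat : ∀ i k, map i = some k → dom.get i = cod.get k

namespace TupleMorphism

/-- The stride entries of the layout encoded by a tuple morphism:
`dᵢ = 0` if `α(i) = *`, and `dᵢ = t₁⋯t_{α(i)−1}` otherwise. -/
def stride (f : TupleMorphism) (i : Fin f.dom.length) : ℕ :=
  match f.map i with
  | none => 0
  | some k => ((f.cod.take k).prod)

/-- The flat layout `L_f = (s₁,…,sₘ):(d₁,…,dₘ)` encoded by a tuple morphism `f`. -/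
def layout (f : TupleMorphism) : FlatLayout :=
  List.ofFn fun i => (f.dom.get i, f.stride i)

/-- A tuple morphism is non-degenerate if `sᵢ = 1` implies `α(i) = *`. -/
def NonDegenerate (f : TupleMorphism) : Prop :=
  ∀ i, f.dom.get i = 1 → f.map i = none

/-- A tuple morphism has standard form if (1) `n > 1` implies `n ∈ Image(α)`, and
(2) for every `1 ≤ j < n` with `j ∉ Image(α)`, both `t_j ≠ 1` and `j+1 ∈ Image(α)`. -/
def StandardForm (f : TupleMorphism) : Prop :=
  (1 < f.cod.length → ∃ i k, f.map i = some k ∧ (k : ℕ) = f.cod.length - 1) ∧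
  ∀ k : Fin f.cod.length, (k : ℕ) + 1 < f.cod.length →
    (¬ ∃ i, f.map i = some k) →
      f.cod.get k ≠ 1 ∧ ∃ i k', f.map i = some k' ∧ (k' : ℕ) = (k : ℕ) + 1

end TupleMorphism

section Aux

open FlatLayout

/-- Distinctness of the `some`-values of the second components. -/
def DistinctSome (a b : (ℕ × ℕ) × Option ℕ) : Prop :=
  ∀ k : ℕ, a.2 = some k → b.2 ≠ some k

lemma distinctSome_symm : ∀ {a b}, DistinctSome a b → DistinctSome b a := by
  intro a b h k hb ha
  exact h k ha hb

/-- The structural data witnessing encodability. -/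
def GoodZ (t : List ℕ) (Z : List ((ℕ × ℕ) × Option ℕ)) : Prop :=
  Z.Pairwise DistinctSome ∧
  ∀ pr ∈ Z, (pr.2 = none → pr.1.2 = 0) ∧
    ∀ k : ℕ, pr.2 = some k →
      k < t.length ∧ pr.1.1 = t.getD k 0 ∧ pr.1.2 = (t.take k).prod

/-- A layout is good if it carries `GoodZ` data. -/
def Good (L : FlatLayout) : Prop :=
  ∃ t Z, (∀ x ∈ t, 0 < x) ∧ GoodZ t Z ∧ Z.map Prod.fst = L

lemma exists_perm_map {α β : Type*} (f : α → β) :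
    ∀ {l₁ l₂ : List β}, l₁.Perm l₂ → ∀ Z : List α, Z.map f = l₁ →
      ∃ Z', Z.Perm Z' ∧ Z'.map f = l₂ := by
  intro l₁ l₂ h
  induction h with
  | nil => intro Z hZ; exact ⟨Z, .refl _, hZ⟩
  | cons x h ih =>
      intro Z hZ
      cases Z with
      | nil => simp at hZ
      | cons z Z0 =>
        simp only [List.map_cons, List.cons.injEq] at hZ
        obtain ⟨Z0', hp, hm⟩ := ih Z0 hZ.2
        exact ⟨z :: Z0', .cons z hp, by simp [hZ.1, hm]⟩
  | swap x y l =>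
      intro Z hZ
      cases Z with
      | nil => simp at hZ
      | cons z1 Z1 =>
        cases Z1 with
        | nil => simp at hZ
        | cons z2 Z0 =>
          simp only [List.map_cons, List.cons.injEq] at hZ
          exact ⟨z2 :: z1 :: Z0, .swap _ _ _, by simp [hZ.1, hZ.2.1, hZ.2.2]⟩
  | trans h1 h2 ih1 ih2 =>
      intro Z hZ
      obtain ⟨Z', hp, hm⟩ := ih1 Z hZ
      obtain ⟨Z'', hp', hm'⟩ := ih2 Z' hm
      exact ⟨Z'', hp.trans hp', hm'⟩

lemma Good.perm {L M : FlatLayout} (h : L.Perm M) (hG : Good L) : Good M := by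
  obtain ⟨t, Z, ht, ⟨hpw, hcond⟩, hmap⟩ := hG
  obtain ⟨Z', hp, hm⟩ := exists_perm_map Prod.fst (hmap ▸ h) Z rfl
  exact ⟨t, Z', ht,
    ⟨(List.Perm.pairwise_iff distinctSome_symm hp).mp hpw,
     fun pr hpr => hcond pr (hp.mem_iff.mpr hpr)⟩, hm⟩

lemma good_of_layout (f : TupleMorphism) : Good f.layout := by
  refine ⟨f.cod, List.ofFn (fun i => ((f.dom.get i, f.stride i), (f.map i).map Fin.val)),
    f.cod_pos, ⟨?_, ?_⟩, ?_⟩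
  · rw [List.pairwise_ofFn]
    intro i j hij k hik hjk
    simp only [Option.map_eq_some_iff] at hik hjk
    obtain ⟨a, ha, hak⟩ := hik
    obtain ⟨b, hb, hbk⟩ := hjk
    have hab : a = b := Fin.ext (hak.trans hbk.symm)
    exact absurd (f.inj i j a ha (hab ▸ hb)) hij.ne
  · intro pr hpr
    rw [List.mem_ofFn] at hpr
    obtain ⟨i, rfl⟩ := hpr
    constructor
    · intro hnone
      simp only [Option.map_eq_none_iff] at hnone
      simp [TupleMorphism.stride, hnone]
    · intro k hk
      simp only [Option.map_eq_some_iff] at hk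
      obtain ⟨a, ha, rfl⟩ := hk
      refine ⟨a.isLt, ?_, ?_⟩
      · show f.dom.get i = f.cod.getD (↑a) 0
        rw [f.compat i a ha, List.getD_eq_getElem _ _ a.isLt]
        rfl
      · simp [TupleMorphism.stride, ha]
  · simp only [TupleMorphism.layout, List.map_ofFn]
    rfl

lemma Good.toMorphism {L : FlatLayout} (hL : L.Valid) (hG : Good L) :
    ∃ f : TupleMorphism, f.layout = L := by
  obtain ⟨t, Z, ht, ⟨hpw, hcond⟩, hmap⟩ := hG
  have hlen : Z.length = L.length := by rw [← hmap, List.length_map]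
  have hidx : ∀ i : Fin (L.map Prod.fst).length, i.val < Z.length := by
    intro i; have := i.isLt; simp only [List.length_map] at this; omega
  have hget : ∀ (n : ℕ) (h : n < Z.length), (Z.get ⟨n, h⟩).1 = L.get ⟨n, by omega⟩ := by
    intro n h
    have h2 : (List.map Prod.fst Z)[n]'(by simpa using h) = (Z[n]'h).1 :=
      List.getElem_map _
    simp only [hmap] at h2
    simpa [List.get_eq_getElem] using h2.symm
  have hZmem : ∀ (n : ℕ) (h : n < Z.length), Z.get ⟨n, h⟩ ∈ Z := fun n h => List.get_mem Z ⟨n, h⟩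
  -- the underlying map, non-dependently
  set F : Fin (L.map Prod.fst).length → Option (Fin t.length) := fun i =>
    match (Z.get ⟨i.val, hidx i⟩).2 with
    | none => none
    | some k => if h : k < t.length then some ⟨k, h⟩ else none
    with hF
  have hFeq : ∀ (i : Fin (L.map Prod.fst).length) (k : Fin t.length),
      F i = some k → (Z.get ⟨i.val, hidx i⟩).2 = some k.val := by
    intro i k h
    rw [hF] at h
    rcases hs : (Z.get ⟨i.val, hidx i⟩).2 with _ | a
    · simp only [hs] at h
      exact (by cases h)
    · simp only [hs] at h
      rcases lt_or_ge a t.length with hlt | hge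
      · rw [dif_pos hlt] at h
        cases h; rfl
      · rw [dif_neg (by omega)] at h
        exact (by cases h)
  refine ⟨⟨L.map Prod.fst, t,
    (by intro s hs
        rw [List.mem_map] at hs
        obtain ⟨p, hp, rfl⟩ := hs
        exact hL p hp),
    ht, F, ?_, ?_⟩, ?_⟩
  · -- injectivity
    intro i j k hi hj
    have ha := hFeq i k hi
    have hb := hFeq j k hj
    by_contra hne
    have hvne : i.val ≠ j.val := fun h => hne (Fin.ext h)
    rw [List.pairwise_iff_get] at hpw
    rcases lt_or_gt_of_ne hvne with h | h
    · exact hpw ⟨i.val, hidx i⟩ ⟨j.val, hidx j⟩ h k.val ha hb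
    · exact hpw ⟨j.val, hidx j⟩ ⟨i.val, hidx i⟩ h k.val hb ha
  · -- compat
    intro i k hik
    have ha := hFeq i k hik
    have h1 := ((hcond _ (hZmem i.val (hidx i))).2 k.val ha).2.1
    have h2 : (L.map Prod.fst).get i = (Z.get ⟨i.val, hidx i⟩).1.1 := by
      rw [show (L.map Prod.fst).get i = (L.get ⟨i.val, by simpa using i.isLt⟩).1 from by simp, hget i.val (hidx i)]
    rw [h2, h1, List.getD_eq_getElem t 0 k.isLt]
    rfl
  · -- layout = L
    apply List.ext_getElem (by simp [TupleMorphism.layout])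
    intro n h1 h2
    have hh : n < (L.map Prod.fst).length := by simpa using h2
    have hn : n < Z.length := by omega
    have hmem := hZmem n hn
    have hgz := hget n hn
    simp only [TupleMorphism.layout, List.getElem_ofFn]
    refine Prod.ext ?_ ?_
    · show (L.map Prod.fst)[n] = (L[n]'h2).1
      simp [List.getElem_map]
    · show TupleMorphism.stride _ _ = (L[n]'h2).2
      have hL2 : (L[n]'h2).2 = (Z.get ⟨n, hn⟩).1.2 := by
        rw [hgz]; rfl
      rcases hsnd : (Z.get ⟨n, hn⟩).2 with _ | k
      · have hFn : F ⟨n, hh⟩ = none := by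
          rw [hF]
          simp only
          rw [show (Z.get ⟨(⟨n, hh⟩ : Fin (L.map Prod.fst).length).val, hidx _⟩).2 = none
            from hsnd]
        have h0 := (hcond _ hmem).1 hsnd
        rw [hL2, h0]
        simp [TupleMorphism.stride, hFn]
      · have hc := (hcond _ hmem).2 k hsnd
        have hFn : F ⟨n, hh⟩ = some ⟨k, hc.1⟩ := by
          rw [hF]
          simp only
          rw [show (Z.get ⟨(⟨n, hh⟩ : Fin (L.map Prod.fst).length).val, hidx _⟩).2 = some k
            from hsnd]
          show (if h : k < t.length then some (⟨k, h⟩ : Fin t.length) else none) = some ⟨k, hc.1⟩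
          rw [dif_pos hc.1]
        rw [hL2, hc.2.2]
        simp [TupleMorphism.stride, hFn]

lemma prefixProd_dvd {t : List ℕ} {k k' : ℕ} (h : k ≤ k') :
    (t.take k).prod ∣ (t.take k').prod := by
  have h1 : t.take k = (t.take k').take k := by
    rw [List.take_take, min_eq_left h]
  rw [h1, ← List.prod_take_mul_prod_drop (t.take k') k]
  exact Dvd.intro _ rfl

lemma prefixProd_pos {t : List ℕ} (ht : ∀ x ∈ t, 0 < x) (k : ℕ) :
    0 < (t.take k).prod :=
  List.prod_pos fun x hx => ht x (List.take_subset k t hx)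

lemma good_sorted_chain {M : FlatLayout} (hs : Sorted M) (hG : Good M) :
    M.Chain' fun p q => p.2 = 0 ∨ p.1 * p.2 ∣ q.2 := by
  obtain ⟨t, Z, ht, ⟨hpw, hcond⟩, hmap⟩ := hG
  have hlen : Z.length = M.length := by rw [← hmap, List.length_map]
  have hget : ∀ (n : ℕ) (h : n < Z.length), (Z.get ⟨n, h⟩).1 = M.get ⟨n, by omega⟩ := by
    intro n h
    have h2 : (List.map Prod.fst Z)[n]'(by simpa using h) = (Z[n]'h).1 :=
      List.getElem_map _
    simp only [hmap] at h2
    simpa [List.get_eq_getElem] using h2.symm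
  refine List.isChain_iff_getElem.mpr ?_
  intro i hi
  have hi1 : i < M.length := by omega
  have hi2 : i + 1 < M.length := by omega
  have hz1 : i < Z.length := by omega
  have hz2 : i + 1 < Z.length := by omega
  set p := M.get ⟨i, hi1⟩ with hp
  set q := M.get ⟨i + 1, hi2⟩ with hq
  show p.2 = 0 ∨ p.1 * p.2 ∣ q.2
  by_cases hp0 : p.2 = 0
  · exact Or.inl hp0
  right
  have hple : ModeLE p q := by
    rw [FlatLayout.Sorted] at hs
    exact List.isChain_iff_getElem.mp hs i hi
  have hq0 : q.2 ≠ 0 := by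
    rcases hple with h | ⟨h, _⟩ <;> omega
  have hc1 := hcond _ (List.get_mem Z ⟨i, hz1⟩)
  have hc2 := hcond _ (List.get_mem Z ⟨i + 1, hz2⟩)
  rcases hs1 : (Z.get ⟨i, hz1⟩).2 with _ | k
  · refine absurd ?_ hp0
    have h0 := hc1.1 hs1
    rw [hget i hz1] at h0
    exact h0
  rcases hs2 : (Z.get ⟨i + 1, hz2⟩).2 with _ | k'
  · refine absurd ?_ hq0
    have h0 := hc2.1 hs2
    rw [hget (i + 1) hz2] at h0
    exact h0
  obtain ⟨hk, hpk1, hpk2⟩ := hc1.2 k hs1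
  obtain ⟨hk', hqk1, hqk2⟩ := hc2.2 k' hs2
  rw [hget i hz1, ← hp] at hpk1 hpk2
  rw [hget (i + 1) hz2, ← hq] at hqk1 hqk2
  have hkk' : k ≠ k' := by
    rw [List.pairwise_iff_get] at hpw
    intro hEq
    exact hpw ⟨i, hz1⟩ ⟨i + 1, hz2⟩ (by simp) k hs1 (hEq ▸ hs2)
  have hPpos : ∀ m, 0 < (t.take m).prod := prefixProd_pos ht
  have hgetD : ∀ {m : ℕ} (hm : m < t.length), t.getD m 0 = t[m] := by
    intro m hm; exact List.getD_eq_getElem t 0 hm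
  have hsucc : (t.take (k + 1)).prod = p.2 * p.1 := by
    rw [List.prod_take_succ t k hk, ← hpk2, hpk1, hgetD hk]
  have hsucc' : (t.take (k' + 1)).prod = q.2 * q.1 := by
    rw [List.prod_take_succ t k' hk', ← hqk2, hqk1, hgetD hk']
  rcases hple with hlt | ⟨heq, hle⟩
  · -- strictly smaller stride
    have hklt : k < k' := by
      by_contra hge
      have hdvd : (t.take k').prod ∣ (t.take k).prod := prefixProd_dvd (by omega)
      have hle2 := Nat.le_of_dvd (hPpos k) hdvd
      rw [← hpk2, ← hqk2] at hle2
      omega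
    have hdvd : (t.take (k + 1)).prod ∣ (t.take k').prod := prefixProd_dvd (by omega)
    rw [hsucc, ← hqk2] at hdvd
    rwa [Nat.mul_comm]
  · -- equal strides
    rcases lt_or_gt_of_ne hkk' with hklt | hkgt
    · have h1 : (t.take (k + 1)).prod ∣ (t.take k').prod := prefixProd_dvd (by omega)
      have h2 : (t.take k).prod ∣ (t.take (k + 1)).prod := prefixProd_dvd (by omega)
      rw [← hqk2, ← heq, hpk2] at h1
      have h3 : (t.take (k + 1)).prod = (t.take k).prod := Nat.dvd_antisymm h1 h2
      have hmul : p.2 * p.1 = p.2 * 1 := by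
        rw [mul_one, hsucc] at *
        rw [h3, ← hpk2]
      have hp1 : p.1 = 1 := Nat.eq_of_mul_eq_mul_left (by omega) hmul
      rw [hp1, one_mul, heq]
    · have h1 : (t.take (k' + 1)).prod ∣ (t.take k).prod := prefixProd_dvd (by omega)
      have h2 : (t.take k').prod ∣ (t.take (k' + 1)).prod := prefixProd_dvd (by omega)
      rw [← hpk2, heq, hqk2] at h1
      have h3 : (t.take (k' + 1)).prod = (t.take k').prod := Nat.dvd_antisymm h1 h2
      have hmul : q.2 * q.1 = q.2 * 1 := by
        rw [mul_one, hsucc'] at *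
        rw [h3, ← hqk2]
      have hq1 : q.1 = 1 := Nat.eq_of_mul_eq_mul_left (by omega) hmul
      have hp1pos : 0 < p.1 := by
        rw [hpk1, hgetD hk]
        exact ht _ (List.getElem_mem hk)
      have hp1 : p.1 = 1 := by omega
      rw [hp1, one_mul, heq]

lemma auxPos : ∀ (M : FlatLayout) (B : ℕ), 0 < B → M.Valid → (∀ p ∈ M, 0 < p.2) →
    M.Chain' (fun p q => p.1 * p.2 ∣ q.2) → (∀ p ∈ M.head?, B ∣ p.2) →
    ∃ (t : List ℕ) (Z : List ((ℕ × ℕ) × Option ℕ)), (∀ x ∈ t, 0 < x) ∧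
      Z.map Prod.fst = M ∧ Z.Pairwise DistinctSome ∧
      ∀ pr ∈ Z, ∃ k : ℕ, pr.2 = some k ∧ k < t.length ∧
        pr.1.1 = t.getD k 0 ∧ pr.1.2 = B * (t.take k).prod
  | [], B, _, _, _, _, _ =>
    ⟨[], [], fun x hx => absurd hx List.not_mem_nil, rfl, List.Pairwise.nil,
      fun pr hpr => absurd hpr List.not_mem_nil⟩
  | (s, d) :: M', B, hB, hV, hpos, hchain, hhead => by
    have hd : 0 < d := hpos _ List.mem_cons_self
    have hs : 0 < s := hV _ List.mem_cons_self
    have hBd : B ∣ d := hhead (s, d) rfl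
    obtain ⟨t', Z', ht', hm', hpw', hc'⟩ := auxPos M' (s * d) (by positivity)
      (fun p hp => hV p (by simp [hp])) (fun p hp => hpos p (by simp [hp]))
      (List.isChain_cons.mp hchain).2 (List.isChain_cons.mp hchain).1
    refine ⟨(d / B) :: s :: t', ((s, d), some 1) :: Z'.map (fun pr => (pr.1, pr.2.map (· + 2))),
      ?_, ?_, ?_, ?_⟩
    · intro x hx
      rcases List.mem_cons.mp hx with rfl | hx
      · exact Nat.div_pos (Nat.le_of_dvd hd hBd) hB
      · rcases List.mem_cons.mp hx with rfl | hx
        · exact hs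
        · exact ht' x hx
    · have hcomp : (Prod.fst ∘ fun pr : (ℕ × ℕ) × Option ℕ => (pr.1, pr.2.map (· + 2))) = Prod.fst := by
        funext pr; rfl
      simp only [List.map_cons, List.map_map, hcomp, hm']
    · rw [List.pairwise_cons]
      constructor
      · intro b hb m h1 h2
        rw [List.mem_map] at hb
        obtain ⟨pr, hpr, rfl⟩ := hb
        obtain ⟨j, hj, _⟩ := hc' pr hpr
        simp only at h1 h2
        rw [hj] at h2
        simp only [Option.map_some] at h2
        cases h1
        cases h2
      · refine List.Pairwise.map _ ?_ hpw'
        intro a b hab m h1 h2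
        simp only [Option.map_eq_some_iff] at h1 h2
        obtain ⟨ja, hja, hma⟩ := h1
        obtain ⟨jb, hjb, hmb⟩ := h2
        have : ja = jb := by omega
        exact hab ja hja (this ▸ hjb)
    · intro pr hpr
      rcases List.mem_cons.mp hpr with rfl | hpr
      · refine ⟨1, rfl, by simp, by simp, ?_⟩
        show d = B * (((d / B) :: s :: t').take 1).prod
        simp [Nat.mul_div_cancel' hBd]
      · rw [List.mem_map] at hpr
        obtain ⟨pr0, hpr0, rfl⟩ := hpr
        obtain ⟨j, hj, hjlt, hj1, hj2⟩ := hc' pr0 hpr0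
        refine ⟨j + 2, by simp [hj], by simpa using hjlt, by simpa using hj1, ?_⟩
        show pr0.1.2 = B * (((d / B) :: s :: t').take (j + 2)).prod
        rw [hj2]
        simp only [List.take_succ_cons, List.prod_cons]
        rw [← Nat.mul_assoc, ← Nat.mul_assoc, Nat.mul_div_cancel' hBd]
        ring

lemma aux_good : ∀ M : FlatLayout, M.Valid → M.Pairwise (fun p q => p.2 ≤ q.2) →
    M.Chain' (fun p q => p.2 = 0 ∨ p.1 * p.2 ∣ q.2) → Good M
  | [], _, _, _ =>
    ⟨[], [], fun x hx => absurd hx List.not_mem_nil,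
      ⟨List.Pairwise.nil, fun pr hpr => absurd hpr List.not_mem_nil⟩, rfl⟩
  | (s, d) :: M', hV, hpair, hchain => by
    rcases Nat.eq_zero_or_pos d with hd | hd
    · subst hd
      obtain ⟨t, Z, ht, ⟨hpw, hc⟩, hm⟩ := aux_good M' (fun p hp => hV p (by simp [hp]))
        (List.pairwise_cons.mp hpair).2 (List.isChain_cons.mp hchain).2
      refine ⟨t, ((s, 0), none) :: Z, ht, ⟨?_, ?_⟩, by simp [hm]⟩
      · rw [List.pairwise_cons]
        exact ⟨fun b _ m h1 _ => (by cases h1), hpw⟩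
      · intro pr hpr
        rcases List.mem_cons.mp hpr with rfl | hpr
        · exact ⟨fun _ => rfl, fun m hm' => by cases hm'⟩
        · exact hc pr hpr
    · have hall : ∀ p ∈ (s, d) :: M', 0 < p.2 := by
        intro p hp
        rcases List.mem_cons.mp hp with rfl | hp
        · exact hd
        · have := (List.pairwise_cons.mp hpair).1 p hp
          simp only at this
          omega
      have hchain2 : ((s, d) :: M').Chain' fun p q => p.1 * p.2 ∣ q.2 := by
        refine List.isChain_iff_getElem.mpr ?_
        replace hchain := List.isChain_iff_getElem.mp hchain
        intro i hi
        rcases hchain i hi with h0 | hdvd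
        · exact absurd h0 (by have := hall _ (List.getElem_mem (l := (s, d) :: M') (n := i) (by omega)); omega)
        · exact hdvd
      obtain ⟨t, Z, ht, hm, hpw, hc⟩ := auxPos ((s, d) :: M') 1 one_pos hV hall hchain2
        (by simp)
      refine ⟨t, Z, ht, ⟨hpw, ?_⟩, hm⟩
      intro pr hpr
      obtain ⟨k, hk, hlt, h1, h2⟩ := hc pr hpr
      refine ⟨fun hn => by rw [hk] at hn; exact (by cases hn), ?_⟩
      intro m hm'
      rw [hk] at hm'
      cases hm'
      exact ⟨hlt, h1, by rw [h2, Nat.one_mul]⟩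

end Aux

open FlatLayout in
theorem exists_tupleMorphism_iff_tractable (L : FlatLayout) (hL : L.Valid) :
    (∃ f : TupleMorphism, f.layout = L) ↔ Tractable L := by
  have hperm : (sortL L).Perm L := List.mergeSort_perm L _
  have hVs : (sortL L).Valid := fun p hp => hL p (hperm.subset hp)
  have hsorted : Sorted (sortL L) := by
    have hpw := List.pairwise_mergeSort (le := fun p q => decide (ModeLE p q))
      (by intro a b c hab hbc
          simp only [decide_eq_true_eq] at *
          unfold ModeLE at *
          omega)
      (by intro a b
          simp only [Bool.or_eq_true, decide_eq_true_eq]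
          unfold ModeLE
          omega) L
    exact (hpw.imp fun h => of_decide_eq_true h).isChain
  constructor
  · rintro ⟨f, rfl⟩
    exact good_sorted_chain hsorted (Good.perm hperm.symm (good_of_layout f))
  · intro htr
    have hpairmono : (sortL L).Pairwise fun p q => p.2 ≤ q.2 := by
      have htrans : IsTrans (ℕ × ℕ) ModeLE := ⟨by intro a b c; unfold ModeLE; omega⟩
      exact (List.isChain_iff_pairwise.mp hsorted).imp
        (fun h => by rcases h with h | ⟨h, _⟩ <;> omega)
    exact Good.toMorphism hL (Good.perm hperm (aux_good _ hVs hpairmono htr))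
end
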